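/- arXiv:2001.01908 — 10 statements merged into one kernel-verified Lean document; each statement's English description precedes it below -/
import Mathlib

section
/- Let G be the complete n-partite graph K(p_1,...,p_n) with n ≥ 3 and partite sets V_1,...,V_n, and let D be an orientation of G. Suppose there exist vertices u ∈ V_i and v ∈ V_j with i ≠ j such that the out-neighbourhood of u restricted to V(G) \ V_j equals the out-neighbourhood of v restricted to V(G) \ V_i. Then the diameter of D is at least 3. -/
/-- `hasPath D u v n`: there is a directed walk of length `n` from `u` to `v` in digraph `D`. -/
def hasPath {V : Type*} (D : V → V → Prop) (u v : V) : ℕ → Prop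
  | 0 => u = v
  | n + 1 => ∃ w, D u w ∧ hasPath D w v n

/-- Directed distance in a digraph, `⊤` if unreachable. -/
noncomputable def ddist {V : Type*} (D : V → V → Prop) (u v : V) : ℕ∞ :=
  sInf {n : ℕ∞ | ∃ m : ℕ, hasPath D u v m ∧ n = m}

/-- Diameter of a digraph. -/
noncomputable def ddiam (V : Type*) (D : V → V → Prop) : ℕ∞ :=
  ⨆ u : V, ⨆ v : V, ddist D u v

/-- `D` is an orientation of the simple graph `G`: every arc lies on an edge, and each
edge gets exactly one direction. -/
def IsOrientation {V : Type*} (G : SimpleGraph V) (D : V → V → Prop) : Prop :=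
  (∀ u v, D u v → G.Adj u v) ∧ ∀ u v, G.Adj u v → (D u v ↔ ¬ D v u)

/-- A digraph is strong if every vertex can reach every other. -/
def IsStrong {V : Type*} (D : V → V → Prop) : Prop :=
  ∀ u v : V, ∃ m : ℕ, hasPath D u v m

/-- The orientation number of a graph: minimum diameter over strong orientations. -/
noncomputable def orientationNumber {V : Type*} (G : SimpleGraph V) : ℕ∞ :=
  sInf {n : ℕ∞ | ∃ D : V → V → Prop, IsOrientation G D ∧ IsStrong D ∧ ddiam V D = n}

/-- The complete tripartite graph `K(a,b,c)`. -/
def Ktri (a b c : ℕ) : SimpleGraph (Σ i : Fin 3, Fin (![a, b, c] i)) :=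
  SimpleGraph.completeMultipartiteGraph fun i => Fin (![a, b, c] i)

lemma dist_ge_three {n : ℕ} (p : Fin n → ℕ)
    (D : (Σ i : Fin n, Fin (p i)) → (Σ i : Fin n, Fin (p i)) → Prop)
    (hD : IsOrientation (SimpleGraph.completeMultipartiteGraph fun i => Fin (p i)) D)
    (u v : Σ i : Fin n, Fin (p i)) (hij : u.1 ≠ v.1)
    (hout : {w | D u w ∧ w.1 ≠ v.1} = {w | D v w ∧ w.1 ≠ u.1})
    (huv : D u v) : 3 ≤ ddist D v u := by
  apply le_sInf
  rintro x ⟨m, hm, rfl⟩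
  have hadj : (SimpleGraph.completeMultipartiteGraph fun i => Fin (p i)).Adj u v := hij
  rcases m with _ | _ | _ | m
  · exact absurd (congrArg Sigma.fst hm.symm) hij
  · obtain ⟨w, hvw, hw⟩ := hm
    exact absurd (hw ▸ hvw) ((hD.2 u v hadj).mp huv)
  · obtain ⟨w, hvw, w', hww', hw'⟩ := hm
    have hwuD : D w u := hw' ▸ hww'
    have hne : w.1 ≠ u.1 := hD.1 w u hwuD
    have hmem : w ∈ {x | D v x ∧ x.1 ≠ u.1} := ⟨hvw, hne⟩
    rw [← hout] at hmem
    exact absurd hwuD ((hD.2 u w (hD.1 u w hmem.1)).mp hmem.1)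
  · exact_mod_cast Nat.le_add_left 3 m

/-- If two vertices in different parts of a complete multipartite graph (`n ≥ 3` parts) have
equal outsets outside each other's parts, the orientation has diameter at least 3. -/
theorem diam_ge_three_of_eq_outsets {n : ℕ} (hn : 3 ≤ n) (p : Fin n → ℕ)
    (D : (Σ i : Fin n, Fin (p i)) → (Σ i : Fin n, Fin (p i)) → Prop)
    (hD : IsOrientation (SimpleGraph.completeMultipartiteGraph fun i => Fin (p i)) D)
    (u v : Σ i : Fin n, Fin (p i)) (hij : u.1 ≠ v.1)
    (hout : {w | D u w ∧ w.1 ≠ v.1} = {w | D v w ∧ w.1 ≠ u.1}) :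
    3 ≤ ddiam _ D := by
  have hadj : (SimpleGraph.completeMultipartiteGraph fun i => Fin (p i)).Adj u v := hij
  by_cases huv : D u v
  · calc (3 : ℕ∞) ≤ ddist D v u := dist_ge_three p D hD u v hij hout huv
      _ ≤ ddiam _ D := le_iSup_of_le v (le_iSup_of_le u le_rfl)
  · have hvu : D v u := by
      by_contra hvu
      exact huv ((hD.2 u v hadj).mpr hvu)
    calc (3 : ℕ∞) ≤ ddist D u v := dist_ge_three p D hD v u hij.symm hout.symm hvu
      _ ≤ ddiam _ D := le_iSup_of_le u (le_iSup_of_le v le_rfl)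
end

section
/- For any integers q ≥ p ≥ 3, if there exists a strong orientation of the complete tripartite graph K(2,p,q) with diameter 2, then q ≤ C(p, ⌊p/2⌋). -/
section Aux
open Finset

abbrev Vt (p q : ℕ) := Σ i : Fin 3, Fin (![2, p, q] i)
def va (p q : ℕ) (i : Fin 2) : Vt p q := ⟨0, i⟩
def vb (p q : ℕ) (j : Fin p) : Vt p q := ⟨1, j⟩
def vc (p q : ℕ) (k : Fin q) : Vt p q := ⟨2, k⟩

lemma choose_mid_mono {m p : ℕ} (h : m ≤ p) : m.choose (m / 2) ≤ p.choose (p / 2) :=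
  le_trans (Nat.choose_le_choose _ h) (Nat.choose_le_middle _ _)

lemma choose_mid_step {p : ℕ} (h : 2 ≤ p) : (p - 1).choose ((p - 1) / 2) + 1 ≤ p.choose (p / 2) := by
  obtain ⟨n, rfl⟩ : ∃ n, p = n + 1 := ⟨p - 1, by omega⟩
  simp only [Nat.add_sub_cancel]
  rcases Nat.even_or_odd n with ⟨k, hk⟩ | ⟨k, hk⟩
  · have hk1 : 1 ≤ k := by omega
    have h1 : (n + 1) / 2 = k := by omega
    have h2 : n / 2 = k := by omega
    rw [h1, h2]
    obtain ⟨k', rfl⟩ : ∃ k', k = k' + 1 := ⟨k - 1, by omega⟩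
    rw [Nat.choose_succ_succ]
    simp only [Nat.succ_eq_add_one]
    have : 0 < n.choose k' := Nat.choose_pos (by omega)
    omega
  · have h1 : (n + 1) / 2 = k + 1 := by omega
    have h2 : n / 2 = k := by omega
    rw [h1, h2, Nat.choose_succ_succ]
    simp only [Nat.succ_eq_add_one]
    have : 0 < n.choose (k + 1) := Nat.choose_pos (by omega)
    omega

lemma choose_mid_combined {p m t : ℕ} (hp : 3 ≤ p) (ht : t ≤ 2) (hm : m + t ≤ p) :
    t + m.choose (m / 2) ≤ p.choose (p / 2) := by
  interval_cases t
  · simpa using choose_mid_mono (by omega : m ≤ p)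
  · have h1 : m.choose (m/2) ≤ (p-1).choose ((p-1)/2) := choose_mid_mono (by omega)
    have h2 := choose_mid_step (by omega : 2 ≤ p)
    omega
  · have h1 : m.choose (m/2) ≤ (p-2).choose ((p-2)/2) := choose_mid_mono (by omega)
    have h2 := choose_mid_step (show 2 ≤ p - 1 by omega)
    have h3 := choose_mid_step (show 2 ≤ p by omega)
    have h4 : p - 1 - 1 = p - 2 := by omega
    rw [h4] at h2
    omega

lemma antichain_interval {p : ℕ} (L U : Finset (Fin p)) (𝒜 : Finset (Finset (Fin p)))
    (hA : ∀ S ∈ 𝒜, L ⊆ S ∧ S ⊆ U)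
    (hanti : ∀ S ∈ 𝒜, ∀ S' ∈ 𝒜, S ≠ S' → ¬ S ⊆ S') :
    𝒜.card ≤ (U \ L).card.choose ((U \ L).card / 2) := by
  classical
  set T := U \ L with hT
  set g : Finset (Fin p) → Finset {x // x ∈ T} := fun S => (S \ L).subtype (· ∈ T) with hg
  have hsub : ∀ S ∈ 𝒜, ∀ S' ∈ 𝒜, (g S ⊆ g S' ↔ S ⊆ S') := by
    intro S hS S' hS'
    constructor
    · intro hgs x hx
      by_cases hxL : x ∈ L
      · exact (hA S' hS').1 hxL
      · have hxT : x ∈ T := mem_sdiff.2 ⟨(hA S hS).2 hx, hxL⟩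
        have h1 : (⟨x, hxT⟩ : {x // x ∈ T}) ∈ g S := by
          simp [hg, Finset.mem_subtype, mem_sdiff, hx, hxL]
        have h2 := hgs h1
        simp only [hg, Finset.mem_subtype, mem_sdiff] at h2
        exact h2.1
    · intro hss y hy
      simp only [hg, Finset.mem_subtype, mem_sdiff] at hy ⊢
      exact ⟨hss hy.1, hy.2⟩
  have hinj : Set.InjOn g ↑𝒜 := by
    intro S hS S' hS' hgeq
    exact Finset.Subset.antisymm
      ((hsub S hS S' hS').1 (le_of_eq hgeq))
      ((hsub S' hS' S hS).1 (le_of_eq hgeq.symm))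
  have hcard : (𝒜.image g).card = 𝒜.card := Finset.card_image_of_injOn hinj
  have hAC : IsAntichain (· ⊆ ·) ((𝒜.image g : Finset (Finset {x // x ∈ T})) : Set (Finset {x // x ∈ T})) := by
    intro X hX Y hY hXY hle
    simp only [coe_image, Set.mem_image, mem_coe] at hX hY
    obtain ⟨S, hS, rfl⟩ := hX
    obtain ⟨S', hS', rfl⟩ := hY
    have hne : S ≠ S' := fun h => hXY (by rw [h])
    exact hanti S hS S' hS' hne ((hsub S hS S' hS').1 hle)
  have hfin := IsAntichain.sperner hAC
  rwa [hcard, Fintype.card_coe] at hfin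

lemma caseB {p : ℕ} (hp : 3 ≤ p) (L U : Finset (Fin p)) (𝒜 : Finset (Finset (Fin p)))
    (hA : ∀ S ∈ 𝒜, L ⊆ S ∧ S ⊆ U)
    (hanti : ∀ S ∈ 𝒜, ∀ S' ∈ 𝒜, S ≠ S' → ¬ S ⊆ S')
    (n0 n1 : ℕ) (h0 : n0 ≤ 1) (h1 : n1 ≤ 1)
    (hL : 0 < n0 → L.Nonempty) (hU : 0 < n1 → U ≠ univ) :
    n0 + n1 + 𝒜.card ≤ p.choose (p / 2) := by
  classical
  have hN3 : 3 ≤ p.choose (p / 2) := by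
    have := choose_mid_mono hp
    norm_num at this
    exact this
  rcases Finset.eq_empty_or_nonempty 𝒜 with rfl | ⟨S0, hS0⟩
  · simp only [card_empty]
    omega
  · have hLU : L ⊆ U := (hA S0 hS0).1.trans (hA S0 hS0).2
    have hAcard := antichain_interval L U 𝒜 hA hanti
    have hsd : (U \ L).card = U.card - L.card := card_sdiff_of_subset hLU
    have hUp : U.card ≤ p := by
      have := card_le_univ U
      simpa using this
    have hLle : L.card ≤ U.card := card_le_card hLU
    have hL' : 0 < n0 → 1 ≤ L.card := fun h => Finset.card_pos.2 (hL h)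
    have hU' : 0 < n1 → U.card < p := fun h => by
      have := (Finset.card_lt_iff_ne_univ U).2 (hU h)
      simpa using this
    have hm : (U \ L).card + (n0 + n1) ≤ p := by
      rcases Nat.eq_zero_or_pos n0 with h | h <;> rcases Nat.eq_zero_or_pos n1 with h' | h'
      · omega
      · have := hU' h'; omega
      · have := hL' h; omega
      · have := hL' h; have := hU' h'; omega
    calc n0 + n1 + 𝒜.card ≤ (n0 + n1) + (U \ L).card.choose ((U \ L).card / 2) := by omega
    _ ≤ p.choose (p / 2) := choose_mid_combined hp (by omega) (by omega)

lemma main_lemma (p q : ℕ) (hp : 3 ≤ p) (D : Vt p q → Vt p q → Prop)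
    (hD1 : ∀ u v, D u v → u.1 ≠ v.1)
    (hD2 : ∀ u v : Vt p q, u.1 ≠ v.1 → (D u v ↔ ¬ D v u))
    (key : ∀ u v : Vt p q, u = v ∨ D u v ∨ ∃ w, D u w ∧ D w v) :
    q ≤ p.choose (p / 2) := by
  classical
  -- basic vertex facts
  have casew : ∀ w : Vt p q,
      (∃ i, w = va p q i) ∨ (∃ j, w = vb p q j) ∨ (∃ k, w = vc p q k) := by
    intro w
    obtain ⟨⟨iv, hiv⟩, x⟩ := w
    interval_cases iv
    · exact Or.inl ⟨x, rfl⟩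
    · exact Or.inr (Or.inl ⟨x, rfl⟩)
    · exact Or.inr (Or.inr ⟨x, rfl⟩)
  have hvc : ∀ k k' : Fin q, vc p q k = vc p q k' → k = k' := by
    intro k k' h; exact eq_of_heq (Sigma.mk.inj h).2
  have hvb : ∀ j j' : Fin p, vb p q j = vb p q j' → j = j' := by
    intro j j' h; exact eq_of_heq (Sigma.mk.inj h).2
  have h_aa : ∀ (i i' : Fin 2), ¬ D (va p q i) (va p q i') :=
    fun i i' h => (hD1 _ _ h) rfl
  have h_bb : ∀ (j j' : Fin p), ¬ D (vb p q j) (vb p q j') :=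
    fun j j' h => (hD1 _ _ h) rfl
  have h_cc : ∀ (k k' : Fin q), ¬ D (vc p q k) (vc p q k') :=
    fun k k' h => (hD1 _ _ h) rfl
  -- out-neighbourhoods
  set S : Fin q → Finset (Fin p) :=
    fun k => univ.filter (fun j => D (vc p q k) (vb p q j)) with hS
  set O : Fin 2 → Finset (Fin p) :=
    fun i => univ.filter (fun j => D (va p q i) (vb p q j)) with hO
  have hmemS : ∀ k j, j ∈ S k ↔ D (vc p q k) (vb p q j) := by
    intro k j; simp [hS]
  have hmemO : ∀ i j, j ∈ O i ↔ D (va p q i) (vb p q j) := by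
    intro i j; simp [hO]
  have h_ba : ∀ i j, D (vb p q j) (va p q i) ↔ j ∉ O i := by
    intro i j
    rw [hD2 _ _ (show (vb p q j).1 ≠ (va p q i).1 by simp [va, vb]), hmemO]
  have h_bc : ∀ k j, D (vb p q j) (vc p q k) ↔ j ∉ S k := by
    intro k j
    rw [hD2 _ _ (show (vb p q j).1 ≠ (vc p q k).1 by simp [vc, vb]), hmemS]
  have h_ca : ∀ i k, D (va p q i) (vc p q k) ↔ ¬ D (vc p q k) (va p q i) := by
    intro i k
    exact hD2 _ _ (show (va p q i).1 ≠ (vc p q k).1 by simp [va, vc])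
  have htwo : ∀ (P : Fin 2 → Prop), (∃ i, P i) → P 0 ∨ P 1 := by
    rintro P ⟨i, hi⟩
    fin_cases i
    · exact Or.inl hi
    · exact Or.inr hi
  -- path facts
  have F1 : ∀ k k', k ≠ k' →
      (∃ i, D (vc p q k) (va p q i) ∧ ¬ D (vc p q k') (va p q i)) ∨
      (∃ j, j ∈ S k ∧ j ∉ S k') := by
    intro k k' hkk
    rcases key (vc p q k) (vc p q k') with he | hd | ⟨w, hw1, hw2⟩
    · exact absurd (hvc _ _ he) hkk
    · exact absurd hd (h_cc _ _)
    · rcases casew w with ⟨i, rfl⟩ | ⟨j, rfl⟩ | ⟨k'', rfl⟩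
      · exact Or.inl ⟨i, hw1, (h_ca i k').1 hw2⟩
      · exact Or.inr ⟨j, (hmemS k j).2 hw1, (h_bc k' j).1 hw2⟩
      · exact absurd hw1 (h_cc _ _)
  have F2 : ∀ k i, D (vc p q k) (va p q i) → ∃ j, j ∉ S k ∧ j ∈ O i := by
    intro k i hE
    rcases key (va p q i) (vc p q k) with he | hd | ⟨w, hw1, hw2⟩
    · exact absurd he (fun h => absurd (congrArg Sigma.fst h) (by simp [va, vc]))
    · exact absurd hE ((h_ca i k).1 hd)
    · rcases casew w with ⟨i', rfl⟩ | ⟨j, rfl⟩ | ⟨k', rfl⟩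
      · exact absurd hw1 (h_aa _ _)
      · exact ⟨j, (h_bc k j).1 hw2, (hmemO i j).2 hw1⟩
      · exact absurd hw2 (h_cc _ _)
  have F3 : ∀ k i, ¬ D (vc p q k) (va p q i) → ∃ j, j ∈ S k ∧ j ∉ O i := by
    intro k i hE
    rcases key (vc p q k) (va p q i) with he | hd | ⟨w, hw1, hw2⟩
    · exact absurd he (fun h => absurd (congrArg Sigma.fst h) (by simp [va, vc]))
    · exact absurd hd hE
    · rcases casew w with ⟨i', rfl⟩ | ⟨j, rfl⟩ | ⟨k', rfl⟩
      · exact absurd hw2 (h_aa _ _)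
      · exact ⟨j, (hmemS k j).2 hw1, (h_ba i j).1 hw2⟩
      · exact absurd hw1 (h_cc _ _)
  have F4 : ∀ k j, j ∈ S k → ∃ i, ¬ D (vc p q k) (va p q i) ∧ j ∉ O i := by
    intro k j hj
    rcases key (vb p q j) (vc p q k) with he | hd | ⟨w, hw1, hw2⟩
    · exact absurd he (fun h => absurd (congrArg Sigma.fst h) (by simp [vb, vc]))
    · exact absurd hj (by simpa using (h_bc k j).1 hd)
    · rcases casew w with ⟨i, rfl⟩ | ⟨j', rfl⟩ | ⟨k', rfl⟩
      · exact ⟨i, (h_ca i k).1 hw2, (h_ba i j).1 hw1⟩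
      · exact absurd hw1 (h_bb _ _)
      · exact absurd hw2 (h_cc _ _)
  have F5 : ∀ k j, j ∉ S k → ∃ i, D (vc p q k) (va p q i) ∧ j ∈ O i := by
    intro k j hj
    rcases key (vc p q k) (vb p q j) with he | hd | ⟨w, hw1, hw2⟩
    · exact absurd he (fun h => absurd (congrArg Sigma.fst h) (by simp [vb, vc]))
    · exact absurd ((hmemS k j).2 hd) hj
    · rcases casew w with ⟨i, rfl⟩ | ⟨j', rfl⟩ | ⟨k', rfl⟩
      · exact ⟨i, hw1, (hmemO i j).2 hw2⟩
      · exact absurd hw2 (h_bb _ _)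
      · exact absurd hw1 (h_cc _ _)
  have F6 : ∀ j j', j ≠ j' →
      (∃ i, j ∉ O i ∧ j' ∈ O i) ∨ (∃ k, j ∉ S k ∧ j' ∈ S k) := by
    intro j j' hjj
    rcases key (vb p q j) (vb p q j') with he | hd | ⟨w, hw1, hw2⟩
    · exact absurd (hvb _ _ he) hjj
    · exact absurd hd (h_bb _ _)
    · rcases casew w with ⟨i, rfl⟩ | ⟨j'', rfl⟩ | ⟨k, rfl⟩
      · exact Or.inl ⟨i, (h_ba i j).1 hw1, (hmemO i j').2 hw2⟩
      · exact absurd hw1 (h_bb _ _)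
      · exact Or.inr ⟨k, (h_bc k j).1 hw1, (hmemS k j').2 hw2⟩
  -- the four classes
  set A : Finset (Fin q) := univ.filter (fun k => D (vc p q k) (va p q 0)) with hA
  set B : Finset (Fin q) := univ.filter (fun k => ¬ D (vc p q k) (va p q 0)) with hB
  set C11 : Finset (Fin q) := A.filter (fun k => D (vc p q k) (va p q 1)) with hC11
  set C10 : Finset (Fin q) := A.filter (fun k => ¬ D (vc p q k) (va p q 1)) with hC10
  set C01 : Finset (Fin q) := B.filter (fun k => D (vc p q k) (va p q 1)) with hC01
  set C00 : Finset (Fin q) := B.filter (fun k => ¬ D (vc p q k) (va p q 1)) with hC00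
  have hm11 : ∀ k, k ∈ C11 ↔ D (vc p q k) (va p q 0) ∧ D (vc p q k) (va p q 1) := by
    intro k; simp [hC11, hA]
  have hm10 : ∀ k, k ∈ C10 ↔ D (vc p q k) (va p q 0) ∧ ¬ D (vc p q k) (va p q 1) := by
    intro k; simp [hC10, hA]
  have hm01 : ∀ k, k ∈ C01 ↔ ¬ D (vc p q k) (va p q 0) ∧ D (vc p q k) (va p q 1) := by
    intro k; simp [hC01, hB]
  have hm00 : ∀ k, k ∈ C00 ↔ ¬ D (vc p q k) (va p q 0) ∧ ¬ D (vc p q k) (va p q 1) := by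
    intro k; simp [hC00, hB]
  have hcards : C11.card + C10.card + C01.card + C00.card = q := by
    have e1 := Finset.card_filter_add_card_filter_not
      (s := (univ : Finset (Fin q))) (p := fun k => D (vc p q k) (va p q 0))
    have e2 := Finset.card_filter_add_card_filter_not
      (s := A) (p := fun k => D (vc p q k) (va p q 1))
    have e3 := Finset.card_filter_add_card_filter_not
      (s := B) (p := fun k => D (vc p q k) (va p q 1))
    simp only [← hA, ← hB, ← hC11, ← hC10, ← hC01, ← hC00, card_univ, Fintype.card_fin] at e1 e2 e3
    omega
  -- incomparability within a class
  have hinc : ∀ k k', k ≠ k' →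
      (D (vc p q k) (va p q 0) ↔ D (vc p q k') (va p q 0)) →
      (D (vc p q k) (va p q 1) ↔ D (vc p q k') (va p q 1)) →
      ∃ j, j ∈ S k ∧ j ∉ S k' := by
    intro k k' hkk h0 h1
    rcases F1 k k' hkk with hA' | hB'
    · rcases htwo _ hA' with ⟨hE, hnE⟩ | ⟨hE, hnE⟩
      · exact absurd (h0.1 hE) hnE
      · exact absurd (h1.1 hE) hnE
    · exact hB'
  -- values of S on the classes
  have hS00 : ∀ k ∈ C00, S k = univ := by
    intro k hk
    rw [hm00] at hk
    apply eq_univ_iff_forall.2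
    intro j
    by_contra hj
    rcases htwo _ (F5 k j hj) with ⟨hE, _⟩ | ⟨hE, _⟩
    · exact hk.1 hE
    · exact hk.2 hE
  have hS11 : ∀ k ∈ C11, S k = ∅ := by
    intro k hk
    rw [hm11] at hk
    apply Finset.eq_empty_iff_forall_notMem.2
    intro j hj
    rcases htwo _ (F4 k j hj) with ⟨hE, _⟩ | ⟨hE, _⟩
    · exact hE hk.1
    · exact hE hk.2
  have hC10low : ∀ k ∈ C10, (O 0)ᶜ ⊆ S k := by
    intro k hk j hj
    rw [hm10] at hk
    rw [Finset.mem_compl] at hj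
    by_contra hjS
    rcases htwo _ (F5 k j hjS) with ⟨_, hjO⟩ | ⟨hE, _⟩
    · exact hj hjO
    · exact hk.2 hE
  have hC10high : ∀ k ∈ C10, S k ⊆ (O 1)ᶜ := by
    intro k hk j hj
    rw [hm10] at hk
    rw [Finset.mem_compl]
    rcases htwo _ (F4 k j hj) with ⟨hE, _⟩ | ⟨_, hjO⟩
    · exact absurd hk.1 hE
    · exact hjO
  have hC01low : ∀ k ∈ C01, (O 1)ᶜ ⊆ S k := by
    intro k hk j hj
    rw [hm01] at hk
    rw [Finset.mem_compl] at hj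
    by_contra hjS
    rcases htwo _ (F5 k j hjS) with ⟨hE, _⟩ | ⟨_, hjO⟩
    · exact hk.1 hE
    · exact hj hjO
  have hC01high : ∀ k ∈ C01, S k ⊆ (O 0)ᶜ := by
    intro k hk j hj
    rw [hm01] at hk
    rw [Finset.mem_compl]
    rcases htwo _ (F4 k j hj) with ⟨_, hjO⟩ | ⟨hE, _⟩
    · exact hjO
    · exact absurd hk.2 hE
  -- nonemptiness consequences
  have hC00ne : ∀ k ∈ C00, ((O 0)ᶜ).Nonempty ∧ ((O 1)ᶜ).Nonempty := by
    intro k hk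
    rw [hm00] at hk
    obtain ⟨j0, _, hj0⟩ := F3 k 0 hk.1
    obtain ⟨j1, _, hj1⟩ := F3 k 1 hk.2
    exact ⟨⟨j0, Finset.mem_compl.2 hj0⟩, ⟨j1, Finset.mem_compl.2 hj1⟩⟩
  have hC11ne : ∀ k ∈ C11, (O 0).Nonempty ∧ (O 1).Nonempty := by
    intro k hk
    rw [hm11] at hk
    obtain ⟨j0, _, hj0⟩ := F2 k 0 hk.1
    obtain ⟨j1, _, hj1⟩ := F2 k 1 hk.2
    exact ⟨⟨j0, hj0⟩, ⟨j1, hj1⟩⟩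
  -- cards of the constant classes
  have hc00 : C00.card ≤ 1 := by
    apply Finset.card_le_one.2
    intro k hk k' hk'
    by_contra hne
    obtain ⟨j, _, hj2⟩ := hinc k k' hne
      (iff_of_false ((hm00 k).1 hk).1 ((hm00 k').1 hk').1)
      (iff_of_false ((hm00 k).1 hk).2 ((hm00 k').1 hk').2)
    rw [hS00 k' hk'] at hj2
    exact hj2 (mem_univ j)
  have hc11 : C11.card ≤ 1 := by
    apply Finset.card_le_one.2
    intro k hk k' hk'
    by_contra hne
    obtain ⟨j, hj1, _⟩ := hinc k k' hne
      (iff_of_true ((hm11 k).1 hk).1 ((hm11 k').1 hk').1)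
      (iff_of_true ((hm11 k).1 hk).2 ((hm11 k').1 hk').2)
    rw [hS11 k hk] at hj1
    exact absurd hj1 (Finset.notMem_empty j)
  have hN3 : 3 ≤ p.choose (p / 2) := by
    have := choose_mid_mono hp
    norm_num at this
    exact this
  by_contra hq
  push_neg at hq
  by_cases h10 : C10.Nonempty
  · by_cases h01 : C01.Nonempty
    · -- Case A : both mixed classes nonempty
      obtain ⟨k1, hk1⟩ := h10
      obtain ⟨k2, hk2⟩ := h01
      have hIeq : (O 0)ᶜ = (O 1)ᶜ :=
        Finset.Subset.antisymm ((hC10low k1 hk1).trans (hC10high k1 hk1))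
          ((hC01low k2 hk2).trans (hC01high k2 hk2))
      have hS10 : ∀ k ∈ C10, S k = (O 0)ᶜ :=
        fun k hk => Finset.Subset.antisymm (by rw [hIeq]; exact hC10high k hk) (hC10low k hk)
      have hS01 : ∀ k ∈ C01, S k = (O 0)ᶜ :=
        fun k hk => Finset.Subset.antisymm (hC01high k hk) (by rw [hIeq]; exact hC01low k hk)
      have hc10 : C10.card ≤ 1 := by
        apply Finset.card_le_one.2
        intro k hk k' hk'
        by_contra hne
        obtain ⟨j, hj1, hj2⟩ := hinc k k' hne
          (iff_of_true ((hm10 k).1 hk).1 ((hm10 k').1 hk').1)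
          (iff_of_false ((hm10 k).1 hk).2 ((hm10 k').1 hk').2)
        rw [hS10 k hk] at hj1
        rw [hS10 k' hk'] at hj2
        exact hj2 hj1
      have hc01 : C01.card ≤ 1 := by
        apply Finset.card_le_one.2
        intro k hk k' hk'
        by_contra hne
        obtain ⟨j, hj1, hj2⟩ := hinc k k' hne
          (iff_of_false ((hm01 k).1 hk).1 ((hm01 k').1 hk').1)
          (iff_of_true ((hm01 k).1 hk).2 ((hm01 k').1 hk').2)
        rw [hS01 k hk] at hj1
        rw [hS01 k' hk'] at hj2
        exact hj2 hj1
      have hcov : ∀ k, S k = univ ∨ S k = ∅ ∨ S k = (O 0)ᶜ := by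
        intro k
        by_cases e0 : D (vc p q k) (va p q 0) <;> by_cases e1 : D (vc p q k) (va p q 1)
        · exact Or.inr (Or.inl (hS11 k ((hm11 k).2 ⟨e0, e1⟩)))
        · exact Or.inr (Or.inr (hS10 k ((hm10 k).2 ⟨e0, e1⟩)))
        · exact Or.inr (Or.inr (hS01 k ((hm01 k).2 ⟨e0, e1⟩)))
        · exact Or.inl (hS00 k ((hm00 k).2 ⟨e0, e1⟩))
      obtain ⟨j1', hj1'S, _⟩ := F3 k1 1 ((hm10 k1).1 hk1).2
      have hIne : ((O 0)ᶜ).Nonempty := ⟨j1', by rw [← hS10 k1 hk1]; exact hj1'S⟩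
      obtain ⟨j2', _, hj2'O⟩ := F2 k1 0 ((hm10 k1).1 hk1).1
      have hOne : (O 0).Nonempty := ⟨j2', hj2'O⟩
      have hO10 : O 1 = O 0 := by
        have h := congrArg compl hIeq
        simpa using h.symm
      have hcompl : ((O 0)ᶜ).card + (O 0).card = p := by
        have h := Finset.card_compl (O 0)
        have h2 : (O 0).card ≤ p := by simpa using card_le_univ (O 0)
        simp only [Fintype.card_fin] at h
        omega
      have hpair : (∃ j ∈ (O 0)ᶜ, ∃ j' ∈ (O 0)ᶜ, j ≠ j') ∨
          (∃ j ∈ O 0, ∃ j' ∈ O 0, j ≠ j') := by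
        have h1 : 1 ≤ ((O 0)ᶜ).card := card_pos.2 hIne
        have h2 : 1 ≤ (O 0).card := card_pos.2 hOne
        by_cases hI2 : 2 ≤ ((O 0)ᶜ).card
        · exact Or.inl (Finset.one_lt_card.1 (by omega))
        · exact Or.inr (Finset.one_lt_card.1 (by omega))
      rcases hpair with ⟨j, hj, j', hj', hne⟩ | ⟨j, hj, j', hj', hne⟩
      · rcases F6 j j' hne with hA' | ⟨k, hkj, hkj'⟩
        · rcases htwo _ hA' with ⟨_, hj'O⟩ | ⟨_, hj'O⟩
          · exact (Finset.mem_compl.1 hj') hj'O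
          · rw [hO10] at hj'O
            exact (Finset.mem_compl.1 hj') hj'O
        · rcases hcov k with hU | hE | hI
          · rw [hU] at hkj
            exact hkj (mem_univ j)
          · rw [hE] at hkj'
            exact absurd hkj' (Finset.notMem_empty _)
          · rw [hI] at hkj
            exact hkj hj
      · rcases F6 j j' hne with hA' | ⟨k, hkj, hkj'⟩
        · rcases htwo _ hA' with ⟨hjO, _⟩ | ⟨hjO, _⟩
          · exact hjO hj
          · rw [hO10] at hjO
            exact hjO hj
        · rcases hcov k with hU | hE | hI
          · rw [hU] at hkj
            exact hkj (mem_univ j)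
          · rw [hE] at hkj'
            exact absurd hkj' (Finset.notMem_empty _)
          · rw [hI] at hkj'
            exact (Finset.mem_compl.1 hkj') hj'
    · -- Case B : C01 empty
      have h01e : C01.card = 0 :=
        Finset.card_eq_zero.2 (Finset.not_nonempty_iff_eq_empty.1 h01)
      have hinj10 : Set.InjOn S ↑C10 := by
        intro k hk k' hk' hSeq
        by_contra hne
        obtain ⟨j, hj1, hj2⟩ := hinc k k' hne
          (iff_of_true ((hm10 k).1 hk).1 ((hm10 k').1 hk').1)
          (iff_of_false ((hm10 k).1 hk).2 ((hm10 k').1 hk').2)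
        rw [hSeq] at hj1
        exact hj2 hj1
      have hcardim : (C10.image S).card = C10.card := card_image_of_injOn hinj10
      have hAsub : ∀ T ∈ C10.image S, (O 0)ᶜ ⊆ T ∧ T ⊆ (O 1)ᶜ := by
        intro T hT
        obtain ⟨k, hk, rfl⟩ := Finset.mem_image.1 hT
        exact ⟨hC10low k hk, hC10high k hk⟩
      have hAanti : ∀ T ∈ C10.image S, ∀ T' ∈ C10.image S, T ≠ T' → ¬ T ⊆ T' := by
        intro T hT T' hT' hne hsub
        obtain ⟨k, hk, rfl⟩ := Finset.mem_image.1 hT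
        obtain ⟨k', hk', rfl⟩ := Finset.mem_image.1 hT'
        have hkk : k ≠ k' := fun h => hne (by rw [h])
        obtain ⟨j, hj1, hj2⟩ := hinc k k' hkk
          (iff_of_true ((hm10 k).1 hk).1 ((hm10 k').1 hk').1)
          (iff_of_false ((hm10 k).1 hk).2 ((hm10 k').1 hk').2)
        exact hj2 (hsub hj1)
      have hcb := caseB hp ((O 0)ᶜ) ((O 1)ᶜ) (C10.image S) hAsub hAanti C00.card C11.card
        hc00 hc11
        (fun h => (hC00ne _ (Finset.card_pos.1 h).choose_spec).1)
        (fun h => by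
          obtain ⟨k, hk⟩ := Finset.card_pos.1 h
          obtain ⟨j, hj⟩ := (hC11ne k hk).2
          intro hequniv
          have : j ∈ (O 1)ᶜ := hequniv ▸ mem_univ j
          exact (Finset.mem_compl.1 this) hj)
      omega
  · -- Case B' : C10 empty
    have h10e : C10.card = 0 :=
      Finset.card_eq_zero.2 (Finset.not_nonempty_iff_eq_empty.1 h10)
    have hinj01 : Set.InjOn S ↑C01 := by
      intro k hk k' hk' hSeq
      by_contra hne
      obtain ⟨j, hj1, hj2⟩ := hinc k k' hne
        (iff_of_false ((hm01 k).1 hk).1 ((hm01 k').1 hk').1)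
        (iff_of_true ((hm01 k).1 hk).2 ((hm01 k').1 hk').2)
      rw [hSeq] at hj1
      exact hj2 hj1
    have hcardim : (C01.image S).card = C01.card := card_image_of_injOn hinj01
    have hAsub : ∀ T ∈ C01.image S, (O 1)ᶜ ⊆ T ∧ T ⊆ (O 0)ᶜ := by
      intro T hT
      obtain ⟨k, hk, rfl⟩ := Finset.mem_image.1 hT
      exact ⟨hC01low k hk, hC01high k hk⟩
    have hAanti : ∀ T ∈ C01.image S, ∀ T' ∈ C01.image S, T ≠ T' → ¬ T ⊆ T' := by
      intro T hT T' hT' hne hsub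
      obtain ⟨k, hk, rfl⟩ := Finset.mem_image.1 hT
      obtain ⟨k', hk', rfl⟩ := Finset.mem_image.1 hT'
      have hkk : k ≠ k' := fun h => hne (by rw [h])
      obtain ⟨j, hj1, hj2⟩ := hinc k k' hkk
        (iff_of_false ((hm01 k).1 hk).1 ((hm01 k').1 hk').1)
        (iff_of_true ((hm01 k).1 hk).2 ((hm01 k').1 hk').2)
      exact hj2 (hsub hj1)
    have hcb := caseB hp ((O 1)ᶜ) ((O 0)ᶜ) (C01.image S) hAsub hAanti C00.card C11.card
      hc00 hc11
      (fun h => (hC00ne _ (Finset.card_pos.1 h).choose_spec).2)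
      (fun h => by
        obtain ⟨k, hk⟩ := Finset.card_pos.1 h
        obtain ⟨j, hj⟩ := (hC11ne k hk).1
        intro hequniv
        have : j ∈ (O 0)ᶜ := hequniv ▸ mem_univ j
        exact (Finset.mem_compl.1 this) hj)
    omega

end Aux

/-- If `K(2,p,q)` (with `q ≥ p ≥ 3`) has a strong orientation of diameter 2,
then `q ≤ C(p, ⌊p/2⌋)`. -/
theorem K2pq_diam_two_imp (p q : ℕ) (hp : 3 ≤ p) (hpq : p ≤ q)
    (h : ∃ D, IsOrientation (Ktri 2 p q) D ∧ IsStrong D ∧ ddiam _ D = 2) :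
    q ≤ p.choose (p / 2) := by
  obtain ⟨D, ⟨hD1', hD2'⟩, _, hdiam⟩ := h
  apply main_lemma p q hp D
  · exact fun u v hd => hD1' u v hd
  · exact fun u v hne => hD2' u v hne
  · intro u v
    have hd : ddist D u v ≤ 2 := by
      rw [← hdiam]
      exact le_trans (le_iSup (fun v => ddist D u v) v)
        (le_iSup (fun u => ⨆ v, ddist D u v) u)
    have hlt : ddist D u v < 3 := lt_of_le_of_lt hd (by norm_num)
    rw [ddist] at hlt
    obtain ⟨a, ⟨m, hm, rfl⟩, hlt3⟩ := sInf_lt_iff.1 hlt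
    have hm3 : m < 3 := by exact_mod_cast hlt3
    interval_cases m
    · left; exact hm
    · right; left
      simp only [hasPath] at hm
      obtain ⟨w, hw, rfl⟩ := hm
      exact hw
    · right; right
      simp only [hasPath] at hm
      obtain ⟨w, hw, w', hw', rfl⟩ := hm
      exact ⟨w, hw, hw'⟩
end

section
/- Let p = kd with integers k, d satisfying 1 < k, d < p, and let 0 ≤ i, j ≤ d. Then Φ(p,d,[i,j]) = Σ_{s=i}^{d} Σ_{t=j}^{d} (−1)^{(s−i)+(t−j)} · (2d)!/(s!·t!·(2d−s−t)!) · C((2d−(s+t))k, (d−t)k) · C(s,i) · C(t,j). -/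
open Finset

open Polynomial in
lemma vandermonde_tuple {ι : Type*} [DecidableEq ι] (s : Finset ι) (k n : ℕ) :
    ∑ μ ∈ s.finsuppAntidiag n, ∏ i ∈ s, k.choose (μ i) = (s.card * k).choose n := by
  have h := PowerSeries.coeff_prod
    (fun _ : ι => (((1 + X : Polynomial ℕ) ^ k : Polynomial ℕ) : PowerSeries ℕ)) n s
  simp only [Polynomial.coeff_coe, Polynomial.coeff_one_add_X_pow, Nat.cast_id] at h
  rw [prod_const, ← Polynomial.coe_pow, ← pow_mul, Polynomial.coeff_coe,
    Polynomial.coeff_one_add_X_pow, Nat.cast_id, mul_comm] at h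
  exact h.symm

/-- The unrestricted count `F(S,T)`. -/
lemma F_eq {n p k : ℕ} (S T : Finset (Fin n)) (hST : Disjoint S T)
    (ht : T.card * k ≤ p) :
    ∑ x ∈ (Finset.Nat.antidiagonalTuple n p).filter
        (fun x => (∀ r ∈ S, x r = 0) ∧ (∀ r ∈ T, x r = k)), ∏ r, k.choose (x r)
      = ((n - S.card - T.card) * k).choose (p - T.card * k) := by
  classical
  set u : Finset (Fin n) := univ \ (S ∪ T) with hu
  have hcard : u.card = n - S.card - T.card := by
    rw [hu, card_sdiff_of_subset (subset_univ _), card_union_of_disjoint hST, card_univ,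
      Fintype.card_fin, Nat.sub_sub]
  rw [← hcard, ← vandermonde_tuple u k (p - T.card * k)]
  apply Finset.sum_nbij'
    (i := fun x => Finsupp.equivFunOnFinite.symm (fun r => if r ∈ S ∪ T then 0 else x r))
    (j := fun μ => fun r => if r ∈ T then k else μ r)
  · -- forward membership
    intro x hx
    simp only [mem_filter, Finset.Nat.mem_antidiagonalTuple] at hx
    obtain ⟨hsum, hS, hT⟩ := hx
    rw [mem_finsuppAntidiag]
    constructor
    · have hsplit : ∑ r ∈ u, x r + ∑ r ∈ S ∪ T, x r = p := by
        rw [hu, Finset.sum_sdiff (subset_univ _)]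
        simpa using hsum
      have hST' : ∑ r ∈ S ∪ T, x r = T.card * k := by
        rw [sum_union hST, Finset.sum_congr rfl hS, Finset.sum_congr rfl hT]
        simp [mul_comm]
      have : ∑ r ∈ u, x r = p - T.card * k := by omega
      rw [← this]
      apply Finset.sum_congr rfl
      intro r hr
      simp only [Finsupp.coe_equivFunOnFinite_symm]
      rw [if_neg]
      rw [hu, mem_sdiff] at hr
      exact hr.2
    · intro r hr
      simp only [Finsupp.mem_support_iff, Finsupp.coe_equivFunOnFinite_symm] at hr
      rw [hu, mem_sdiff]
      refine ⟨mem_univ _, ?_⟩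
      intro hmem
      exact hr (if_pos hmem)
  · -- backward membership
    intro μ hμ
    rw [mem_finsuppAntidiag] at hμ
    obtain ⟨hsum, hsupp⟩ := hμ
    simp only [mem_filter, Finset.Nat.mem_antidiagonalTuple]
    have hzero : ∀ r ∈ S ∪ T, μ r = 0 := by
      intro r hr
      by_contra h
      have := hsupp (Finsupp.mem_support_iff.mpr h)
      rw [hu, mem_sdiff] at this
      exact this.2 hr
    refine ⟨?_, ?_, ?_⟩
    · have h1 : ∑ r, (if r ∈ T then k else μ r) =
          T.card * k + ∑ r ∈ univ \ T, μ r := by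
        rw [← Finset.sum_sdiff (subset_univ T), add_comm]
        congr 1
        · rw [Finset.sum_congr rfl (fun r hr => if_pos hr), sum_const, smul_eq_mul]
        · exact Finset.sum_congr rfl fun r hr => if_neg (by simpa using (mem_sdiff.mp hr).2)
      have hsum' : ∑ r ∈ u, μ r = p - T.card * k := hsum
      have h2 : ∑ r ∈ univ \ T, μ r = ∑ r ∈ u, μ r := by
        apply (Finset.sum_subset ?_ ?_).symm
        · rw [hu]; exact sdiff_subset_sdiff (le_refl _) (subset_union_right)
        · intro r hr hru
          by_contra h
          exact hru (hsupp (Finsupp.mem_support_iff.mpr h))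
      rw [h1, h2, hsum']
      omega
    · intro r hr
      rw [if_neg (disjoint_left.mp hST hr), hzero r (mem_union_left _ hr)]
    · intro r hr
      rw [if_pos hr]
  · -- left inverse
    intro x hx
    simp only [mem_filter, Finset.Nat.mem_antidiagonalTuple] at hx
    obtain ⟨-, hS, hT⟩ := hx
    funext r
    simp only [Finsupp.coe_equivFunOnFinite_symm]
    by_cases hrT : r ∈ T
    · simp [hrT, hT r hrT]
    · rw [if_neg hrT]
      by_cases hrS : r ∈ S
      · simp [hrS, hS r hrS]
      · simp [hrS, hrT]
  · -- right inverse
    intro μ hμ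
    rw [mem_finsuppAntidiag] at hμ
    obtain ⟨-, hsupp⟩ := hμ
    ext r
    simp only [Finsupp.coe_equivFunOnFinite_symm]
    by_cases hr : r ∈ S ∪ T
    · rw [if_pos hr]
      symm
      by_contra h
      have := hsupp (Finsupp.mem_support_iff.mpr h)
      rw [hu, mem_sdiff] at this
      exact this.2 hr
    · rw [if_neg hr, if_neg (fun h => hr (mem_union_right _ h))]
  · -- values
    intro x hx
    simp only [mem_filter, Finset.Nat.mem_antidiagonalTuple] at hx
    obtain ⟨-, hS, hT⟩ := hx
    rw [← Finset.prod_sdiff (subset_univ (S ∪ T)), ← hu]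
    have h1 : ∏ r ∈ S ∪ T, k.choose (x r) = 1 := by
      rw [prod_union hST]
      rw [Finset.prod_eq_one (fun r hr => by rw [hS r hr, Nat.choose_zero_right]),
        Finset.prod_eq_one (fun r hr => by rw [hT r hr, Nat.choose_self]), mul_one]
    rw [h1, mul_one]
    apply Finset.prod_congr rfl
    intro r hr
    congr 1
    simp only [Finsupp.coe_equivFunOnFinite_symm]
    rw [if_neg]
    rw [hu, mem_sdiff] at hr
    exact hr.2
open Finset

lemma F_zero {n p k : ℕ} (S T : Finset (Fin n)) (ht : p < T.card * k) :
    ∑ x ∈ (Finset.Nat.antidiagonalTuple n p).filter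
        (fun x => (∀ r ∈ S, x r = 0) ∧ (∀ r ∈ T, x r = k)), ∏ r, k.choose (x r) = 0 := by
  apply Finset.sum_eq_zero
  intro x hx
  simp only [mem_filter, Finset.Nat.mem_antidiagonalTuple] at hx
  obtain ⟨hsum, -, hT⟩ := hx
  exfalso
  have h1 : ∑ r ∈ T, x r ≤ p := hsum ▸ Finset.sum_le_sum_of_subset (subset_univ T)
  rw [Finset.sum_congr rfl hT, sum_const, smul_eq_mul] at h1
  omega

lemma indicator_expand {ι : Type*} [DecidableEq ι] (u : Finset ι) (x : ι → ℕ) (k : ℕ)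
    (hk : 2 ≤ k) (w : ℤ) (hw : w ≠ 0 → ∀ r ∈ u, x r ≤ k) :
    (if ∀ r ∈ u, 1 ≤ x r ∧ x r ≤ k - 1 then w else 0) =
      ∑ B ∈ u.powerset, ∑ A ∈ (u \ B).powerset, (-1 : ℤ) ^ (A.card + B.card) *
        (if (∀ r ∈ A, x r = 0) ∧ (∀ r ∈ B, x r = k) then w else 0) := by
  by_cases hw0 : w = 0
  · simp [hw0]
  have hx := hw hw0
  have key : (if ∀ r ∈ u, 1 ≤ x r ∧ x r ≤ k - 1 then (1 : ℤ) else 0) =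
      ∑ B ∈ u.powerset, ∑ A ∈ (u \ B).powerset, (-1 : ℤ) ^ (A.card + B.card) *
        (if (∀ r ∈ A, x r = 0) ∧ (∀ r ∈ B, x r = k) then 1 else 0) := by
    rw [← Finset.prod_boole]
    have hfac : ∀ r ∈ u, (if 1 ≤ x r ∧ x r ≤ k - 1 then (1 : ℤ) else 0) =
        (-(if x r = k then (1 : ℤ) else 0)) + (1 - (if x r = 0 then (1 : ℤ) else 0)) := by
      intro r hr
      have := hx r hr
      split_ifs <;> omega
    rw [Finset.prod_congr rfl hfac, Finset.prod_add]
    apply Finset.sum_congr rfl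
    intro B hB
    have hBfac : ∀ r ∈ B, (-(if x r = k then (1 : ℤ) else 0)) =
        (-1) * (if x r = k then (1 : ℤ) else 0) := fun r _ => by ring
    rw [Finset.prod_congr rfl hBfac, Finset.prod_mul_distrib, prod_const,
      Finset.prod_boole]
    have hAexp : ∀ r ∈ u \ B, ((1 : ℤ) - (if x r = 0 then (1 : ℤ) else 0)) =
        (-(if x r = 0 then (1 : ℤ) else 0)) + 1 := fun r _ => by ring
    rw [Finset.prod_congr rfl hAexp, Finset.prod_add]
    rw [Finset.mul_sum]
    apply Finset.sum_congr rfl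
    intro A hA
    have hAfac : ∀ r ∈ A, (-(if x r = 0 then (1 : ℤ) else 0)) =
        (-1) * (if x r = 0 then (1 : ℤ) else 0) := fun r _ => by ring
    rw [Finset.prod_congr rfl hAfac, Finset.prod_mul_distrib, prod_const,
      Finset.prod_boole, Finset.prod_const_one]
    rw [pow_add]
    split_ifs with h1 h2 h3 h4 h5 <;> push_neg at * <;> ring_nf <;>
      first
      | rfl
      | (exfalso; tauto)
  calc (if ∀ r ∈ u, 1 ≤ x r ∧ x r ≤ k - 1 then w else 0)
      = (if ∀ r ∈ u, 1 ≤ x r ∧ x r ≤ k - 1 then (1 : ℤ) else 0) * w := by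
        split_ifs <;> ring
    _ = _ := by
        rw [key, Finset.sum_mul]
        apply Finset.sum_congr rfl
        intro B _
        rw [Finset.sum_mul]
        apply Finset.sum_congr rfl
        intro A _
        rw [mul_assoc]
        congr 1
        split_ifs <;> ring

/-- `G s t`: the value of `F` on disjoint sets of cardinalities `s`, `t`. -/
def Gdef (k d : ℕ) (s t : ℕ) : ℤ :=
  if t ≤ d then (((2 * d - s - t) * k).choose ((d - t) * k) : ℤ) else 0

lemma Fval {k d p : ℕ} (hp : p = k * d) (hk0 : 0 < k) (S' T' : Finset (Fin (2 * d)))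
    (hdisj : Disjoint S' T') :
    ((∑ x ∈ (Finset.Nat.antidiagonalTuple (2 * d) p).filter
        (fun x => (∀ r ∈ S', x r = 0) ∧ (∀ r ∈ T', x r = k)), ∏ r, k.choose (x r) : ℕ) : ℤ)
      = Gdef k d S'.card T'.card := by
  by_cases hT' : T'.card ≤ d
  · rw [Gdef, if_pos hT']
    have htk : T'.card * k ≤ p := by
      rw [hp, mul_comm k d]
      exact Nat.mul_le_mul_right k hT'
    rw [F_eq S' T' hdisj htk]
    congr 2
    rw [Nat.sub_mul, hp, mul_comm k d]
  · rw [Gdef, if_neg hT']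
    rw [F_zero S' T']
    · norm_num
    · push_neg at hT'
      calc p = d * k := by rw [hp, mul_comm]
        _ < (d + 1) * k := (Nat.mul_lt_mul_right hk0).mpr (by omega)
        _ ≤ T'.card * k := Nat.mul_le_mul_right k hT'

lemma Gzero {k d : ℕ} (hk0 : 0 < k) (s t : ℕ) (hs : d < s) (hstn : s + t ≤ 2 * d) :
    Gdef k d s t = 0 := by
  by_cases ht : t ≤ d
  · rw [Gdef, if_pos ht]
    have hlt : (2 * d - s - t) * k < (d - t) * k :=
      (Nat.mul_lt_mul_right hk0).mpr (by omega)
    rw [Nat.choose_eq_zero_of_lt hlt]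
    norm_num
  · rw [Gdef, if_neg ht]

lemma sum_powerset_card {α : Type*} (v : Finset α) (h : ℕ → ℤ) :
    ∑ A ∈ v.powerset, h A.card = ∑ a ∈ Finset.range (v.card + 1), (v.card.choose a : ℤ) * h a := by
  rw [Finset.sum_powerset]
  apply Finset.sum_congr rfl
  intro a _
  rw [Finset.sum_powersetCard]
  simp [nsmul_eq_mul]

lemma sum_Icc_shift (c m : ℕ) (f : ℕ → ℤ) :
    ∑ t ∈ Finset.Icc c (c + m), f t = ∑ b ∈ Finset.range (m + 1), f (c + b) := by
  apply Finset.sum_nbij' (i := fun t => t - c) (j := fun b => c + b)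
  · intro t ht; rw [mem_Icc] at ht; rw [mem_range]; omega
  · intro b hb; rw [mem_range] at hb; rw [mem_Icc]; omega
  · intro t ht; rw [mem_Icc] at ht; omega
  · intro b _; omega
  · intro t ht; rw [mem_Icc] at ht; congr 1; omega

lemma coeff_id (d i j s t : ℕ) (hi : i ≤ d) (hj : j ≤ d) (his : i ≤ s) (hsd : s ≤ d)
    (hjt : j ≤ t) (htd : t ≤ d) :
    (2 * d).choose i * ((2 * d - i).choose j) * ((2 * d - i - j).choose (t - j)) *
        ((2 * d - i - j - (t - j)).choose (s - i))
      = ((2 * d).factorial / (s.factorial * t.factorial * (2 * d - s - t).factorial)) *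
          (s.choose i * t.choose j) := by
  set a := s - i with ha
  set b := t - j with hb
  set r := 2 * d - s - t with hr
  have e1 : (2 * d).choose i * i.factorial * (2 * d - i).factorial = (2 * d).factorial :=
    Nat.choose_mul_factorial_mul_factorial (by omega)
  have e2 : (2 * d - i).choose j * j.factorial * (2 * d - i - j).factorial
      = (2 * d - i).factorial :=
    Nat.choose_mul_factorial_mul_factorial (by omega)
  have e3 : (2 * d - i - j).choose b * b.factorial * (2 * d - i - j - b).factorial
      = (2 * d - i - j).factorial :=
    Nat.choose_mul_factorial_mul_factorial (by omega)
  have e4 : (2 * d - i - j - b).choose a * a.factorial * (2 * d - i - j - b - a).factorial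
      = (2 * d - i - j - b).factorial :=
    Nat.choose_mul_factorial_mul_factorial (by omega)
  have hr4 : 2 * d - i - j - b - a = r := by omega
  have e5 : (2 * d).choose s * s.factorial * (2 * d - s).factorial = (2 * d).factorial :=
    Nat.choose_mul_factorial_mul_factorial (by omega)
  have e6 : (2 * d - s).choose t * t.factorial * r.factorial = (2 * d - s).factorial := by
    have := Nat.choose_mul_factorial_mul_factorial (n := 2 * d - s) (k := t) (by omega)
    rwa [show 2 * d - s - t = r from rfl] at this
  have e7 : s.choose i * i.factorial * a.factorial = s.factorial := by
    have := Nat.choose_mul_factorial_mul_factorial (n := s) (k := i) his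
    rwa [show s - i = a from rfl] at this
  have e8 : t.choose j * j.factorial * b.factorial = t.factorial := by
    have := Nat.choose_mul_factorial_mul_factorial (n := t) (k := j) hjt
    rwa [show t - j = b from rfl] at this
  have hmult : (2 * d).factorial / (s.factorial * t.factorial * r.factorial)
      = (2 * d).choose s * (2 * d - s).choose t := by
    apply Nat.div_eq_of_eq_mul_left
    · positivity
    · rw [← e5, ← e6]; ring
  rw [hmult]
  apply Nat.eq_of_mul_eq_mul_right
    (show 0 < i.factorial * j.factorial * a.factorial * b.factorial * r.factorial by positivity)
  have hL : (2 * d).choose i * ((2 * d - i).choose j) * ((2 * d - i - j).choose b) *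
      ((2 * d - i - j - b).choose a) *
      (i.factorial * j.factorial * a.factorial * b.factorial * r.factorial)
      = (2 * d).factorial := by
    rw [← e1, ← e2, ← e3, ← e4, hr4]; ring
  have hR : (2 * d).choose s * (2 * d - s).choose t * (s.choose i * t.choose j) *
      (i.factorial * j.factorial * a.factorial * b.factorial * r.factorial)
      = (2 * d).factorial := by
    rw [← e5, ← e6, ← e7, ← e8]; ring
  rw [hL, hR]

lemma inner_eq {k d p i j : ℕ} (hp : p = k * d) (hk : 1 < k) (hi : i ≤ d) (hj : j ≤ d)
    (S T : Finset (Fin (2 * d))) (hS : S.card = i) (hTsub : T ⊆ Finset.univ \ S)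
    (hT : T.card = j) (u : Finset (Fin (2 * d))) (hu : u = Finset.univ \ (S ∪ T)) :
    (∑ x ∈ (Finset.Nat.antidiagonalTuple (2 * d) p).filter
        (fun x => (∀ r ∈ S, x r = 0) ∧ (∀ r ∈ T, x r = k) ∧
          ∀ r, r ∉ S → r ∉ T → 1 ≤ x r ∧ x r ≤ k - 1),
      ∏ r, (k.choose (x r) : ℤ))
    = ∑ b ∈ Finset.range (2 * d - i - j + 1), ((2 * d - i - j).choose b : ℤ) *
        ∑ a ∈ Finset.range (2 * d - i - j - b + 1), ((2 * d - i - j - b).choose a : ℤ) *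
          ((-1 : ℤ) ^ (a + b) * Gdef k d (i + a) (j + b)) := by
  have hk0 : 0 < k := by omega
  have hdST : Disjoint S T := by
    rw [disjoint_right]
    intro r hrT
    exact (mem_sdiff.mp (hTsub hrT)).2
  have hucard : u.card = 2 * d - i - j := by
    have h1 : (S ∪ T).card = i + j := by rw [card_union_of_disjoint hdST, hS, hT]
    rw [hu, card_sdiff_of_subset (subset_univ _), h1, card_univ, Fintype.card_fin]
    omega
  have hsplit : (Finset.Nat.antidiagonalTuple (2 * d) p).filter
        (fun x => (∀ r ∈ S, x r = 0) ∧ (∀ r ∈ T, x r = k) ∧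
          ∀ r, r ∉ S → r ∉ T → 1 ≤ x r ∧ x r ≤ k - 1)
      = ((Finset.Nat.antidiagonalTuple (2 * d) p).filter
          (fun x => (∀ r ∈ S, x r = 0) ∧ (∀ r ∈ T, x r = k))).filter
          (fun x => ∀ r ∈ u, 1 ≤ x r ∧ x r ≤ k - 1) := by
    rw [Finset.filter_filter]
    apply Finset.filter_congr
    intro x _
    constructor
    · rintro ⟨h1, h2, h3⟩
      refine ⟨⟨h1, h2⟩, fun r hr => ?_⟩
      rw [hu, mem_sdiff, mem_union] at hr
      exact h3 r (fun h => hr.2 (Or.inl h)) (fun h => hr.2 (Or.inr h))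
    · rintro ⟨⟨h1, h2⟩, h3⟩
      refine ⟨h1, h2, fun r hrS hrT => h3 r ?_⟩
      rw [hu, mem_sdiff, mem_union]
      exact ⟨mem_univ r, fun h => h.elim hrS hrT⟩
  rw [hsplit]
  have hsf : ∑ x ∈ ((Finset.Nat.antidiagonalTuple (2 * d) p).filter
          (fun x => (∀ r ∈ S, x r = 0) ∧ (∀ r ∈ T, x r = k))).filter
          (fun x => ∀ r ∈ u, 1 ≤ x r ∧ x r ≤ k - 1),
        ∏ r, (k.choose (x r) : ℤ)
      = ∑ x ∈ (Finset.Nat.antidiagonalTuple (2 * d) p).filter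
          (fun x => (∀ r ∈ S, x r = 0) ∧ (∀ r ∈ T, x r = k)),
          if ∀ r ∈ u, 1 ≤ x r ∧ x r ≤ k - 1 then ∏ r, (k.choose (x r) : ℤ) else 0 :=
    Finset.sum_filter _ _
  rw [hsf]
  have hpoint : ∀ x ∈ (Finset.Nat.antidiagonalTuple (2 * d) p).filter
      (fun x => (∀ r ∈ S, x r = 0) ∧ (∀ r ∈ T, x r = k)),
      (if ∀ r ∈ u, 1 ≤ x r ∧ x r ≤ k - 1 then ∏ r, (k.choose (x r) : ℤ) else 0)
      = ∑ B ∈ u.powerset, ∑ A ∈ (u \ B).powerset, (-1 : ℤ) ^ (A.card + B.card) *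
          (if (∀ r ∈ A, x r = 0) ∧ (∀ r ∈ B, x r = k) then ∏ r, (k.choose (x r) : ℤ) else 0) := by
    intro x _
    have hw : (∏ r, (k.choose (x r) : ℤ)) ≠ 0 → ∀ r ∈ u, x r ≤ k := by
      intro hne r _
      by_contra hgt
      push_neg at hgt
      exact hne (Finset.prod_eq_zero (mem_univ r)
        (Nat.cast_eq_zero.mpr (Nat.choose_eq_zero_of_lt hgt)))
    have h := indicator_expand u x k hk (∏ r, (k.choose (x r) : ℤ)) hw
    convert h using 2
    apply Finset.sum_congr rfl
    intro A _
    congr!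
  refine ((Finset.sum_congr rfl hpoint).trans ?_)
  refine Finset.sum_comm.trans ?_
  have step1 : ∀ B ∈ u.powerset,
      (∑ x ∈ (Finset.Nat.antidiagonalTuple (2 * d) p).filter
          (fun x => (∀ r ∈ S, x r = 0) ∧ (∀ r ∈ T, x r = k)),
        ∑ A ∈ (u \ B).powerset, (-1 : ℤ) ^ (A.card + B.card) *
          (if (∀ r ∈ A, x r = 0) ∧ (∀ r ∈ B, x r = k) then ∏ r, (k.choose (x r) : ℤ) else 0))
      = ∑ A ∈ (u \ B).powerset, (-1 : ℤ) ^ (A.card + B.card) *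
          Gdef k d (i + A.card) (j + B.card) := by
    intro B hB
    rw [Finset.sum_comm]
    apply Finset.sum_congr rfl
    intro A hA
    rw [← Finset.mul_sum]
    congr 1
    have hAu : A ⊆ u := (mem_powerset.mp hA).trans sdiff_subset
    have hBu : B ⊆ u := mem_powerset.mp hB
    have hSu : Disjoint u S := by
      rw [hu]
      exact disjoint_sdiff_self_left.mono_right (subset_union_left)
    have hTu : Disjoint u T := by
      rw [hu]
      exact disjoint_sdiff_self_left.mono_right (subset_union_right)
    have hSA : Disjoint S A := (hSu.symm.mono_right hAu)
    have hTB : Disjoint T B := (hTu.symm.mono_right hBu)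
    have hAB : Disjoint A B := by
      rw [disjoint_left]
      intro r hrA
      exact (mem_sdiff.mp ((mem_powerset.mp hA) hrA)).2
    have hdisj : Disjoint (S ∪ A) (T ∪ B) := by
      rw [disjoint_union_left]
      constructor
      · rw [disjoint_union_right]
        exact ⟨hdST, (hSu.symm.mono_right hBu).symm.symm⟩
      · rw [disjoint_union_right]
        exact ⟨(hTu.symm.mono_right hAu).symm, hAB⟩
    rw [← Finset.sum_filter, Finset.filter_filter]
    have hfc : (Finset.Nat.antidiagonalTuple (2 * d) p).filter
        (fun x => ((∀ r ∈ S, x r = 0) ∧ (∀ r ∈ T, x r = k)) ∧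
          ((∀ r ∈ A, x r = 0) ∧ (∀ r ∈ B, x r = k)))
        = (Finset.Nat.antidiagonalTuple (2 * d) p).filter
        (fun x => (∀ r ∈ S ∪ A, x r = 0) ∧ (∀ r ∈ T ∪ B, x r = k)) := by
      ext x
      simp only [Finset.mem_filter, Finset.forall_mem_union]
      tauto
    rw [hfc]
    have := Fval hp hk0 (S ∪ A) (T ∪ B) hdisj
    rw [card_union_of_disjoint hSA, card_union_of_disjoint hTB, hS, hT] at this
    rw [← this]
    push_cast
    rfl
  refine ((Finset.sum_congr rfl step1).trans ?_)
  have step2 : ∀ B ∈ u.powerset,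
      (∑ A ∈ (u \ B).powerset, (-1 : ℤ) ^ (A.card + B.card) *
        Gdef k d (i + A.card) (j + B.card))
      = ∑ a ∈ Finset.range (2 * d - i - j - B.card + 1),
          ((2 * d - i - j - B.card).choose a : ℤ) *
            ((-1 : ℤ) ^ (a + B.card) * Gdef k d (i + a) (j + B.card)) := by
    intro B hB
    have h := sum_powerset_card (u \ B)
      (fun a => (-1 : ℤ) ^ (a + B.card) * Gdef k d (i + a) (j + B.card))
    rw [card_sdiff_of_subset (mem_powerset.mp hB), hucard] at h
    exact h
  refine ((Finset.sum_congr rfl step2).trans ?_)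
  have h := sum_powerset_card u
    (fun b => ∑ a ∈ Finset.range (2 * d - i - j - b + 1),
      ((2 * d - i - j - b).choose a : ℤ) *
        ((-1 : ℤ) ^ (a + b) * Gdef k d (i + a) (j + b)))
  rw [hucard] at h
  exact h


/-- `Φ*(p,d)` (for `p = k·d`): the sum over tuples `(x_1,…,x_{2d})` with `Σ x_i = p` and
`1 ≤ x_i ≤ k−1` of `Π C(k, x_i)`. -/
def PhiStar (k d p : ℕ) : ℕ :=
  ∑ x ∈ (Finset.Nat.antidiagonalTuple (2 * d) p).filter
      (fun x => ∀ i, 1 ≤ x i ∧ x i ≤ k - 1),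
    ∏ i, k.choose (x i)

/-- `Φ(p,d,[i,j])` (for `p = k·d`): sum over disjoint index sets `S, T` of sizes `i, j`
and tuples summing to `p` with `x_r = 0` on `S`, `x_r = k` on `T` and `1 ≤ x_r ≤ k−1`
otherwise, of `Π C(k, x_r)`. -/
def Phi (k d p i j : ℕ) : ℕ :=
  ∑ S ∈ (Finset.univ : Finset (Fin (2 * d))).powersetCard i,
    ∑ T ∈ ((Finset.univ : Finset (Fin (2 * d))) \ S).powersetCard j,
      ∑ x ∈ (Finset.Nat.antidiagonalTuple (2 * d) p).filter
          (fun x => (∀ r ∈ S, x r = 0) ∧ (∀ r ∈ T, x r = k) ∧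
            ∀ r, r ∉ S → r ∉ T → 1 ≤ x r ∧ x r ≤ k - 1),
        ∏ r, k.choose (x r)

/-- The inclusion–exclusion formula for `Φ(p,d,[i,j])`. -/
theorem Phi_eq (k d p i j : ℕ) (hp : p = k * d) (hk : 1 < k) (hkp : k < p)
    (hd : 1 < d) (hdp : d < p) (hi : i ≤ d) (hj : j ≤ d) :
    (Phi k d p i j : ℤ) =
      ∑ s ∈ Finset.Icc i d, ∑ t ∈ Finset.Icc j d,
        (-1 : ℤ) ^ ((s - i) + (t - j)) *
          ((2 * d).factorial / (s.factorial * t.factorial * (2 * d - s - t).factorial) : ℕ) *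
          ((2 * d - (s + t)) * k).choose ((d - t) * k) * s.choose i * t.choose j := by
  have hk0 : 0 < k := by omega
  have hijd : i + j ≤ 2 * d := by omega
  -- Step 2 : reduce to a double binomial sum
  have hmain : (Phi k d p i j : ℤ)
      = ((2 * d).choose i : ℤ) * (((2 * d - i).choose j : ℤ) *
        ∑ b ∈ Finset.range (2 * d - i - j + 1), ((2 * d - i - j).choose b : ℤ) *
          ∑ a ∈ Finset.range (2 * d - i - j - b + 1), ((2 * d - i - j - b).choose a : ℤ) *
            ((-1 : ℤ) ^ (a + b) * Gdef k d (i + a) (j + b))) := by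
    rw [Phi]
    push_cast
    have h1 : ∀ S ∈ (Finset.univ : Finset (Fin (2 * d))).powersetCard i,
        (∑ T ∈ ((Finset.univ : Finset (Fin (2 * d))) \ S).powersetCard j,
          ∑ x ∈ (Finset.Nat.antidiagonalTuple (2 * d) p).filter
              (fun x => (∀ r ∈ S, x r = 0) ∧ (∀ r ∈ T, x r = k) ∧
                ∀ r, r ∉ S → r ∉ T → 1 ≤ x r ∧ x r ≤ k - 1),
            ∏ r, (k.choose (x r) : ℤ))
        = ((2 * d - i).choose j : ℤ) *
          ∑ b ∈ Finset.range (2 * d - i - j + 1), ((2 * d - i - j).choose b : ℤ) *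
            ∑ a ∈ Finset.range (2 * d - i - j - b + 1), ((2 * d - i - j - b).choose a : ℤ) *
              ((-1 : ℤ) ^ (a + b) * Gdef k d (i + a) (j + b)) := by
      intro S hS
      obtain ⟨hSsub, hScard⟩ := mem_powersetCard.mp hS
      have h2 : ∀ T ∈ ((Finset.univ : Finset (Fin (2 * d))) \ S).powersetCard j,
          (∑ x ∈ (Finset.Nat.antidiagonalTuple (2 * d) p).filter
              (fun x => (∀ r ∈ S, x r = 0) ∧ (∀ r ∈ T, x r = k) ∧
                ∀ r, r ∉ S → r ∉ T → 1 ≤ x r ∧ x r ≤ k - 1),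
            ∏ r, (k.choose (x r) : ℤ))
          = ∑ b ∈ Finset.range (2 * d - i - j + 1), ((2 * d - i - j).choose b : ℤ) *
              ∑ a ∈ Finset.range (2 * d - i - j - b + 1), ((2 * d - i - j - b).choose a : ℤ) *
                ((-1 : ℤ) ^ (a + b) * Gdef k d (i + a) (j + b)) := by
        intro T hT
        exact inner_eq hp hk hi hj S T hScard (mem_powersetCard.mp hT).1
          (mem_powersetCard.mp hT).2 _ rfl
      rw [Finset.sum_congr rfl h2, Finset.sum_const, card_powersetCard,
        card_sdiff_of_subset (subset_univ S), card_univ, Fintype.card_fin, hScard, nsmul_eq_mul]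
    rw [Finset.sum_congr rfl h1, Finset.sum_const, card_powersetCard,
      card_univ, Fintype.card_fin, nsmul_eq_mul]
  rw [hmain]
  -- E-terms
  set E : ℕ → ℕ → ℤ := fun s t =>
    (-1 : ℤ) ^ ((s - i) + (t - j)) * ((2 * d).choose i : ℤ) * ((2 * d - i).choose j : ℤ) *
      ((2 * d - i - j).choose (t - j) : ℤ) * ((2 * d - i - j - (t - j)).choose (s - i) : ℤ) *
      Gdef k d s t with hE
  -- Step 3a : reindex to Icc
  have h3a : ((2 * d).choose i : ℤ) * (((2 * d - i).choose j : ℤ) *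
        ∑ b ∈ Finset.range (2 * d - i - j + 1), ((2 * d - i - j).choose b : ℤ) *
          ∑ a ∈ Finset.range (2 * d - i - j - b + 1), ((2 * d - i - j - b).choose a : ℤ) *
            ((-1 : ℤ) ^ (a + b) * Gdef k d (i + a) (j + b)))
      = ∑ t ∈ Finset.Icc j (2 * d - i), ∑ s ∈ Finset.Icc i (2 * d - t), E s t := by
    have hshift := sum_Icc_shift j (2 * d - i - j)
      (fun t => ∑ s ∈ Finset.Icc i (2 * d - t), E s t)
    rw [show j + (2 * d - i - j) = 2 * d - i from by omega] at hshift
    rw [hshift, Finset.mul_sum, Finset.mul_sum]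
    apply Finset.sum_congr rfl
    intro b hb
    rw [Finset.mem_range] at hb
    have hshift2 := sum_Icc_shift i (2 * d - i - j - b) (fun s => E s (j + b))
    rw [show i + (2 * d - i - j - b) = 2 * d - (j + b) from by omega] at hshift2
    rw [hshift2, Finset.mul_sum, Finset.mul_sum, Finset.mul_sum]
    apply Finset.sum_congr rfl
    intro a ha
    rw [hE]
    simp only [Nat.add_sub_cancel_left]
    ring
  rw [h3a]
  -- Step 3b : prune the ranges
  have h3b : ∑ t ∈ Finset.Icc j (2 * d - i), ∑ s ∈ Finset.Icc i (2 * d - t), E s t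
      = ∑ t ∈ Finset.Icc j d, ∑ s ∈ Finset.Icc i d, E s t := by
    have houter : ∑ t ∈ Finset.Icc j d, ∑ s ∈ Finset.Icc i (2 * d - t), E s t
        = ∑ t ∈ Finset.Icc j (2 * d - i), ∑ s ∈ Finset.Icc i (2 * d - t), E s t := by
      apply Finset.sum_subset (Finset.Icc_subset_Icc_right (by omega))
      intro t ht hnt
      rw [Finset.mem_Icc] at ht
      rw [Finset.mem_Icc] at hnt
      have htd : d < t := by omega
      apply Finset.sum_eq_zero
      intro s hs
      rw [hE]
      simp only []
      rw [Gdef, if_neg (by omega)]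
      ring
    rw [← houter]
    apply Finset.sum_congr rfl
    intro t ht
    rw [Finset.mem_Icc] at ht
    symm
    apply Finset.sum_subset (Finset.Icc_subset_Icc_right (by omega))
    intro s hs hns
    rw [Finset.mem_Icc] at hs
    rw [Finset.mem_Icc] at hns
    have hsd : d < s := by omega
    rw [hE]
    simp only []
    rw [Gzero hk0 s t hsd (by omega)]
    ring
  rw [h3b, Finset.sum_comm]
  -- Step 3c : termwise identification
  apply Finset.sum_congr rfl
  intro s hs
  apply Finset.sum_congr rfl
  intro t ht
  rw [Finset.mem_Icc] at hs ht
  rw [hE]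
  simp only []
  rw [Gdef, if_pos ht.2]
  have hco := coeff_id d i j s t hi hj hs.1 hs.2 ht.1 ht.2
  have hcoz : ((2 * d).choose i : ℤ) * ((2 * d - i).choose j : ℤ) *
      ((2 * d - i - j).choose (t - j) : ℤ) * ((2 * d - i - j - (t - j)).choose (s - i) : ℤ)
      = (((2 * d).factorial / (s.factorial * t.factorial * (2 * d - s - t).factorial) : ℕ) : ℤ) *
        ((s.choose i : ℤ) * (t.choose j : ℤ)) := by
    exact_mod_cast congrArg (Nat.cast : ℕ → ℤ) hco
  rw [show 2 * d - (s + t) = 2 * d - s - t from by omega]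
  calc (-1 : ℤ) ^ (s - i + (t - j)) * ((2 * d).choose i : ℤ) * ((2 * d - i).choose j : ℤ) *
      ((2 * d - i - j).choose (t - j) : ℤ) * ((2 * d - i - j - (t - j)).choose (s - i) : ℤ) *
      (((2 * d - s - t) * k).choose ((d - t) * k) : ℤ)
      = (-1 : ℤ) ^ (s - i + (t - j)) *
        (((2 * d).choose i : ℤ) * ((2 * d - i).choose j : ℤ) *
          ((2 * d - i - j).choose (t - j) : ℤ) * ((2 * d - i - j - (t - j)).choose (s - i) : ℤ)) *
        (((2 * d - s - t) * k).choose ((d - t) * k) : ℤ) := by ring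
    _ = _ := by rw [hcoz]; ring
end

section
/- Let p = kd with integers k, d satisfying 1 < k, d < p. Then Φ*(p,d) = Σ_{s=0}^{d} Σ_{t=0}^{d} (−1)^{s+t} · (2d)!/(s!·t!·(2d−s−t)!) · C((2d−(s+t))k, (d−t)k). -/
open Finset

open Polynomial

lemma coeff_pow_tuple (Q : Polynomial ℤ) :
    ∀ (n p : ℕ), (Q ^ n).coeff p = ∑ x ∈ Finset.Nat.antidiagonalTuple n p, ∏ i, Q.coeff (x i) := by
  intro n
  induction n with
  | zero =>
    intro p
    cases p with
    | zero => simp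
    | succ p => simp [Finset.Nat.antidiagonalTuple_zero_succ, Polynomial.coeff_one]
  | succ n ih =>
    intro p
    rw [pow_succ', Polynomial.coeff_mul]
    simp_rw [ih, Finset.mul_sum]
    rw [Finset.sum_sigma']
    refine Finset.sum_bij' (fun y _ => Fin.cons y.1.1 y.2)
      (fun (x : Fin (n+1) → ℕ) _ => (⟨(x 0, ∑ i : Fin n, x i.succ), fun i : Fin n => x i.succ⟩ : Σ _ : ℕ × ℕ, Fin n → ℕ)) ?_ ?_ ?_ ?_ ?_
    · rintro ⟨⟨a, b⟩, y⟩ hy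
      simp only [Finset.mem_sigma, Finset.HasAntidiagonal.mem_antidiagonal, Finset.Nat.mem_antidiagonalTuple] at hy ⊢
      rw [Fin.sum_cons]
      simp [hy.2, hy.1]
    · intro x hx
      simp only [Finset.Nat.mem_antidiagonalTuple, Finset.mem_sigma, Finset.HasAntidiagonal.mem_antidiagonal] at hx ⊢
      constructor
      · rw [← hx, Fin.sum_univ_succ]
      · trivial
    · rintro ⟨⟨a, b⟩, y⟩ hy
      simp only [Finset.mem_sigma, Finset.HasAntidiagonal.mem_antidiagonal, Finset.Nat.mem_antidiagonalTuple] at hy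
      simp [Fin.cons_zero, Fin.cons_succ, hy.2]
    · intro x hx
      simp [Fin.cons_self_tail]
      exact funext fun i => by cases i using Fin.cases <;> simp
    · rintro ⟨⟨a, b⟩, y⟩ hy
      simp only []
      rw [Fin.prod_univ_succ]
      simp

lemma coeff_P (k : ℕ) (hk : 1 < k) (n : ℕ) :
    ((1 + X : Polynomial ℤ) ^ k - 1 - X ^ k).coeff n =
      if 1 ≤ n ∧ n ≤ k - 1 then (k.choose n : ℤ) else 0 := by
  rw [Polynomial.coeff_sub, Polynomial.coeff_sub, Polynomial.coeff_one_add_X_pow,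
    Polynomial.coeff_one, Polynomial.coeff_X_pow]
  split_ifs with h1 h2 h3 h4 h5 h6
  all_goals try omega
  all_goals try ring1
  · subst h1; simp
  · subst h5; simp
  · rw [Nat.choose_eq_zero_of_lt (show k < n by omega)]; simp

lemma phiStar_eq_coeff (k d p : ℕ) (hk : 1 < k) :
    (PhiStar k d p : ℤ) = (((1 + X : Polynomial ℤ) ^ k - 1 - X ^ k) ^ (2 * d)).coeff p := by
  rw [coeff_pow_tuple]
  unfold PhiStar
  push_cast
  rw [Finset.sum_filter]
  refine Finset.sum_congr rfl fun x hx => ?_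
  by_cases h : ∀ i, 1 ≤ x i ∧ x i ≤ k - 1
  · rw [if_pos h]
    refine Finset.prod_congr rfl fun i _ => ?_
    rw [coeff_P k hk, if_pos (h i)]
  · rw [if_neg h]
    push_neg at h
    obtain ⟨i, hi⟩ := h
    refine (Finset.prod_eq_zero (Finset.mem_univ i) ?_).symm
    rw [coeff_P k hk, if_neg (by omega)]

lemma coeff_P_pow (k d p : ℕ) :
    ((((1 + X : Polynomial ℤ) ^ k - 1 - X ^ k)) ^ (2 * d)).coeff p =
      ∑ t ∈ Finset.range (2 * d + 1), ∑ s ∈ Finset.range (2 * d - t + 1),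
        (-1 : ℤ) ^ (s + t) * ((2 * d).choose t) * ((2 * d - t).choose s) *
          (if k * t ≤ p then (((k * (2 * d - t - s)).choose (p - k * t) : ℤ)) else 0) := by
  have hP : ((1 + X : Polynomial ℤ) ^ k - 1 - X ^ k) = (-(X ^ k)) + ((1 + X) ^ k - 1) := by ring
  rw [hP, add_pow, Polynomial.finset_sum_coeff]
  refine Finset.sum_congr rfl fun t ht => ?_
  have hinner : ((1 + X : Polynomial ℤ) ^ k - 1) ^ (2 * d - t) =
      ∑ s ∈ Finset.range (2 * d - t + 1),
        (-1 : Polynomial ℤ) ^ s * (1 + X) ^ (k * (2 * d - t - s)) * ((2 * d - t).choose s : Polynomial ℤ) := by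
    have h2 : ((1 + X : Polynomial ℤ) ^ k - 1) = (-1) + (1 + X) ^ k := by ring
    rw [h2, add_pow]
    refine Finset.sum_congr rfl fun s hs => ?_
    rw [← pow_mul]
  rw [hinner, Finset.mul_sum, Finset.sum_mul, Polynomial.finset_sum_coeff]
  refine Finset.sum_congr rfl fun s hs => ?_
  have hterm : (-(X ^ k) : Polynomial ℤ) ^ t *
        ((-1 : Polynomial ℤ) ^ s * (1 + X) ^ (k * (2 * d - t - s)) * ((2 * d - t).choose s : Polynomial ℤ)) *
          ((2 * d).choose t : Polynomial ℤ) =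
      Polynomial.C ((-1 : ℤ) ^ (s + t) * ((2 * d).choose t : ℤ) * ((2 * d - t).choose s : ℤ)) *
        ((1 + X) ^ (k * (2 * d - t - s)) * X ^ (k * t)) := by
    simp only [map_mul, map_pow, map_neg, map_one, Polynomial.C_eq_natCast, ← pow_mul]
    ring
  rw [hterm, Polynomial.coeff_C_mul, mul_assoc, Polynomial.coeff_mul_X_pow']
  split_ifs with h
  · rw [Polynomial.coeff_one_add_X_pow]
    ring
  · ring

lemma multinomial_eq' (d s t : ℕ) (hs : s ≤ d) (ht : t ≤ d) :
    ((2 * d).factorial / (s.factorial * t.factorial * (2 * d - s - t).factorial)) =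
      (2 * d).choose t * (2 * d - t).choose s := by
  have h1 : t ≤ 2 * d := by omega
  have h2 : s ≤ 2 * d - t := by omega
  have e : 2 * d - s - t = 2 * d - t - s := by omega
  have key : (2 * d).choose t * (2 * d - t).choose s *
      (s.factorial * t.factorial * (2 * d - s - t).factorial) = (2 * d).factorial := by
    rw [e]
    calc (2 * d).choose t * (2 * d - t).choose s *
          (s.factorial * t.factorial * (2 * d - t - s).factorial)
        = ((2 * d - t).choose s * s.factorial * (2 * d - t - s).factorial) *
            ((2 * d).choose t * t.factorial) := by ring
      _ = (2 * d - t).factorial * ((2 * d).choose t * t.factorial) := by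
            rw [Nat.choose_mul_factorial_mul_factorial h2]
      _ = (2 * d).choose t * t.factorial * (2 * d - t).factorial := by ring
      _ = (2 * d).factorial := Nat.choose_mul_factorial_mul_factorial h1
  exact Nat.div_eq_of_eq_mul_left (by positivity) key.symm


/-- The inclusion–exclusion formula for `Φ*(p,d)`. -/
theorem PhiStar_eq (k d p : ℕ) (hp : p = k * d) (hk : 1 < k) (hkp : k < p)
    (hd : 1 < d) (hdp : d < p) :
    (PhiStar k d p : ℤ) =
      ∑ s ∈ Finset.range (d + 1), ∑ t ∈ Finset.range (d + 1),
        (-1 : ℤ) ^ (s + t) *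
          ((2 * d).factorial / (s.factorial * t.factorial * (2 * d - s - t).factorial) : ℕ) *
          ((2 * d - (s + t)) * k).choose ((d - t) * k) := by
  rw [phiStar_eq_coeff k d p hk, coeff_P_pow]
  have hk0 : 0 < k := by omega
  -- restrict t to range (d+1)
  rw [← Finset.sum_subset (Finset.range_subset_range.mpr (by omega : d + 1 ≤ 2 * d + 1))
    (fun t ht htd => Finset.sum_eq_zero fun s hs => by
      have h1 : ¬ k * t ≤ p := by
        rw [hp]
        have : k * (d + 1) ≤ k * t := Nat.mul_le_mul_left k (by
          simp only [Finset.mem_range, not_lt] at htd; omega)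
        nlinarith
      rw [if_neg h1, mul_zero])]
  rw [Finset.sum_comm]
  refine Finset.sum_congr rfl fun t ht => ?_
  have htd : t ≤ d := by simpa using Nat.lt_succ_iff.mp (Finset.mem_range.mp ht)
  have hkt : k * t ≤ p := by rw [hp]; exact Nat.mul_le_mul_left k htd
  have hpkt : p - k * t = (d - t) * k := by
    rw [hp, Nat.mul_comm k d, Nat.mul_comm k t, ← tsub_mul]
  rw [← Finset.sum_subset (Finset.range_subset_range.mpr (by omega : d + 1 ≤ 2 * d - t + 1))
    (fun s hs hsd => by
      simp only [Finset.mem_range, not_lt] at hs hsd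
      rw [if_pos hkt, hpkt,
        Nat.choose_eq_zero_of_lt (show k * (2 * d - t - s) < (d - t) * k by
          rw [Nat.mul_comm (d - t) k]
          exact (Nat.mul_lt_mul_left hk0).mpr (by omega))]
      simp)]
  refine Finset.sum_congr rfl fun s hs => ?_
  have hsd : s ≤ d := by simpa using Nat.lt_succ_iff.mp (Finset.mem_range.mp hs)
  rw [if_pos hkt, hpkt, multinomial_eq' d s t hsd htd]
  have e1 : k * (2 * d - t - s) = (2 * d - (s + t)) * k := by
    rw [Nat.mul_comm]; congr 1; omega
  rw [e1]
  push_cast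
  ring
end

section
/- Let p = kd with integers k, d satisfying 1 < k, d < p. Then for all 0 ≤ i, j ≤ d, Φ(p,d,[i,j]) = Φ(p,d,[j,i]). -/
open Finset

lemma inner_swap (k d p : ℕ) (hp : p = k * d) (hk : 1 < k)
    (S T : Finset (Fin (2 * d))) :
    (∑ x ∈ (Finset.Nat.antidiagonalTuple (2 * d) p).filter
          (fun x => (∀ r ∈ S, x r = 0) ∧ (∀ r ∈ T, x r = k) ∧
            ∀ r, r ∉ S → r ∉ T → 1 ≤ x r ∧ x r ≤ k - 1),
        ∏ r, k.choose (x r)) =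
    ∑ x ∈ (Finset.Nat.antidiagonalTuple (2 * d) p).filter
          (fun x => (∀ r ∈ T, x r = 0) ∧ (∀ r ∈ S, x r = k) ∧
            ∀ r, r ∉ T → r ∉ S → 1 ≤ x r ∧ x r ≤ k - 1),
        ∏ r, k.choose (x r) := by
  have hk0 : 0 < k := by omega
  have key : ∀ (A B : Finset (Fin (2 * d))) (x : Fin (2 * d) → ℕ),
      x ∈ (Finset.Nat.antidiagonalTuple (2 * d) p).filter
          (fun x => (∀ r ∈ A, x r = 0) ∧ (∀ r ∈ B, x r = k) ∧
            ∀ r, r ∉ A → r ∉ B → 1 ≤ x r ∧ x r ≤ k - 1) →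
      ∀ r, x r ≤ k := by
    intro A B x hx r
    simp only [mem_filter] at hx
    obtain ⟨-, h1, h2, h3⟩ := hx
    by_cases hA : r ∈ A
    · simp [h1 r hA]
    by_cases hB : r ∈ B
    · simp [h2 r hB]
    · have := h3 r hA hB; omega
  have mapmem : ∀ (A B : Finset (Fin (2 * d))) (x : Fin (2 * d) → ℕ),
      x ∈ (Finset.Nat.antidiagonalTuple (2 * d) p).filter
          (fun x => (∀ r ∈ A, x r = 0) ∧ (∀ r ∈ B, x r = k) ∧
            ∀ r, r ∉ A → r ∉ B → 1 ≤ x r ∧ x r ≤ k - 1) →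
      (fun r => k - x r) ∈ (Finset.Nat.antidiagonalTuple (2 * d) p).filter
          (fun x => (∀ r ∈ B, x r = 0) ∧ (∀ r ∈ A, x r = k) ∧
            ∀ r, r ∉ B → r ∉ A → 1 ≤ x r ∧ x r ≤ k - 1) := by
    intro A B x hx
    have hle := key A B x hx
    simp only [mem_filter, Finset.Nat.mem_antidiagonalTuple] at hx ⊢
    obtain ⟨hsum, h1, h2, h3⟩ := hx
    refine ⟨?_, fun r hr => by simp [h2 r hr], fun r hr => by simp [h1 r hr],
      fun r hrB hrA => by have := h3 r hrA hrB; omega⟩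
    rw [Finset.sum_tsub_distrib _ (fun r _ => hle r), hsum, Finset.sum_const]
    simp only [Finset.card_univ, Fintype.card_fin, smul_eq_mul]
    have h2 : 2 * d * k = p + p := by subst hp; ring
    omega
  refine Finset.sum_nbij' (fun x => fun r => k - x r) (fun x => fun r => k - x r)
    (mapmem S T) (mapmem T S) ?_ ?_ ?_
  · intro x hx
    funext r
    have := key S T x hx r
    simp; omega
  · intro x hx
    funext r
    have := key T S x hx r
    simp; omega
  · intro x hx
    exact Finset.prod_congr rfl fun r _ => (Nat.choose_symm (key S T x hx r)).symm

theorem Phi_symm' (k d p i j : ℕ) (hp : p = k * d) (hk : 1 < k) :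
    Phi k d p i j = Phi k d p j i := by
  unfold Phi
  rw [Finset.sum_comm' (t' := Finset.univ.powersetCard j)
      (s' := fun T => (Finset.univ \ T).powersetCard i) ?_]
  · exact Finset.sum_congr rfl fun T _ => Finset.sum_congr rfl fun S _ =>
      inner_swap k d p hp hk S T
  · intro S T
    simp only [Finset.mem_powersetCard, Finset.subset_sdiff, Finset.subset_univ, true_and,
      Finset.mem_powersetCard_univ]
    constructor
    · rintro ⟨hS, hT, hTc⟩; exact ⟨⟨hT.symm, hS⟩, hTc⟩
    · rintro ⟨⟨hd, hS⟩, hT⟩; exact ⟨hS, hd.symm, hT⟩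

/-- Symmetry: `Φ(p,d,[i,j]) = Φ(p,d,[j,i])`. -/
theorem Phi_symm (k d p i j : ℕ) (hp : p = k * d) (hk : 1 < k) (hkp : k < p)
    (hd : 1 < d) (hdp : d < p) (hi : i ≤ d) (hj : j ≤ d) :
    Phi k d p i j = Phi k d p j i := by
  exact Phi_symm' k d p i j hp hk
end

section
/- For every even integer p ≥ 4, Φ*(p,2) = C(2p,p) − 8·C(3p/2, p) + 12·C(p, p/2) − 6. -/
open Finset

open Polynomial in
lemma tupleSum (φ : Polynomial ℤ) : ∀ m n, (∑ x ∈ Finset.Nat.antidiagonalTuple m n,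
    ∏ i, φ.coeff (x i)) = (φ ^ m).coeff n := by
  intro m
  induction m with
  | zero => intro n; cases n <;> simp [Polynomial.coeff_one]
  | succ m ih =>
    intro n
    rw [pow_succ', Polynomial.coeff_mul]
    have : ∀ ab ∈ Finset.HasAntidiagonal.antidiagonal n,
        φ.coeff ab.1 * (φ ^ m).coeff ab.2 =
        ∑ x ∈ Finset.Nat.antidiagonalTuple m ab.2, φ.coeff ab.1 * ∏ i, φ.coeff (x i) := by
      intro ab _
      rw [← Finset.mul_sum, ih]
    rw [Finset.sum_congr rfl this, Finset.sum_sigma']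
    refine Finset.sum_nbij' (fun y => ⟨(y 0, ∑ i, Fin.tail y i), Fin.tail y⟩) (fun a => Fin.cons a.1.1 a.2) ?_ ?_ ?_ ?_ ?_
    · intro y hy
      simp only [Finset.Nat.mem_antidiagonalTuple] at hy
      simp only [Finset.mem_sigma, Finset.HasAntidiagonal.mem_antidiagonal, Finset.Nat.mem_antidiagonalTuple]
      refine ⟨?_, trivial⟩
      rw [← hy, Fin.sum_univ_succ]; rfl
    · rintro ⟨⟨a, b⟩, x⟩ h
      simp only [Finset.mem_sigma, Finset.HasAntidiagonal.mem_antidiagonal, Finset.Nat.mem_antidiagonalTuple] at h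
      simp [Finset.Nat.mem_antidiagonalTuple, Fin.sum_cons, h.2, h.1]
    · intro y hy
      simp [Fin.cons_self_tail]
    · rintro ⟨⟨a, b⟩, x⟩ h
      simp only [Finset.mem_sigma, Finset.HasAntidiagonal.mem_antidiagonal, Finset.Nat.mem_antidiagonalTuple] at h
      simp [Fin.tail_cons, Fin.cons_zero, h.2]
    · intro y hy
      simp [Fin.prod_univ_succ, Fin.tail]

open Polynomial in
/-- For even `p ≥ 4`: `Φ*(p,2) = C(2p,p) − 8·C(3p/2,p) + 12·C(p,p/2) − 6`.
Here `k = p/2` and `d = 2`. -/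
theorem PhiStar_two (p : ℕ) (hp : 4 ≤ p) (hev : Even p) :
    (PhiStar (p / 2) 2 p : ℤ) =
      (2 * p).choose p - 8 * (3 * p / 2).choose p + 12 * p.choose (p / 2) - 6 := by
  obtain ⟨k, rfl⟩ := hev
  have hk : 2 ≤ k := by omega
  have h2 : (k + k) / 2 = k := by omega
  have h3 : 3 * (k + k) / 2 = 3 * k := by omega
  rw [h2, h3]
  set ψ : ℤ[X] := (1 + X) ^ k - 1 - X ^ k with hψdef
  have hcoeff : ∀ j, ψ.coeff j = if 1 ≤ j ∧ j ≤ k - 1 then (k.choose j : ℤ) else 0 := by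
    intro j
    have hc : ψ.coeff j = (k.choose j : ℤ) - (if j = 0 then 1 else 0)
        - (if j = k then 1 else 0) := by
      simp [hψdef, Polynomial.coeff_sub, Polynomial.coeff_one_add_X_pow,
        Polynomial.coeff_one, Polynomial.coeff_X_pow]
    rw [hc]
    by_cases hcond : 1 ≤ j ∧ j ≤ k - 1
    · rw [if_pos hcond, if_neg (by omega), if_neg (by omega)]; ring
    · rw [if_neg hcond]
      have : j = 0 ∨ j = k ∨ k < j := by omega
      rcases this with h | h | h
      · rw [h, if_pos rfl, if_neg (by omega : ¬ (0 : ℕ) = k), Nat.choose_zero_right]; ring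
      · rw [h, if_neg (by omega : ¬ k = 0), if_pos rfl, Nat.choose_self]; ring
      · rw [Nat.choose_eq_zero_of_lt h, if_neg (by omega), if_neg (by omega)]; simp
  have h1 : (PhiStar k 2 (k + k) : ℤ) = (ψ ^ (2 * 2)).coeff (k + k) := by
    rw [PhiStar, ← tupleSum ψ (2 * 2) (k + k)]
    push_cast
    rw [Finset.sum_filter]
    apply Finset.sum_congr rfl
    intro x hx
    by_cases hall : ∀ i, 1 ≤ x i ∧ x i ≤ k - 1
    · rw [if_pos hall]
      exact Finset.prod_congr rfl fun i _ => by rw [hcoeff, if_pos (hall i)]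
    · rw [if_neg hall]
      push_neg at hall; obtain ⟨i, hi⟩ := hall
      symm; apply Finset.prod_eq_zero (Finset.mem_univ i)
      rw [hcoeff, if_neg (by omega)]
  have expand : ψ ^ (2 * 2) = (1 + X : ℤ[X]) ^ (k * 4) - 4 * (1 + X) ^ (k * 3)
      - 4 * ((1 + X) ^ (k * 3) * X ^ k) + 6 * (1 + X) ^ (k * 2)
      + 12 * ((1 + X) ^ (k * 2) * X ^ k) + 6 * ((1 + X) ^ (k * 2) * X ^ (k * 2))
      - 4 * (1 + X) ^ k - 12 * ((1 + X) ^ k * X ^ k) - 12 * ((1 + X) ^ k * X ^ (k * 2))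
      - 4 * ((1 + X) ^ k * X ^ (k * 3)) + 1 + 4 * X ^ k + 6 * X ^ (k * 2)
      + 4 * X ^ (k * 3) + X ^ (k * 4) := by
    simp only [hψdef, pow_mul]; ring
  rw [h1, expand]
  simp only [Polynomial.coeff_add, Polynomial.coeff_sub, Polynomial.coeff_ofNat_mul,
    Polynomial.coeff_mul_X_pow', Polynomial.coeff_one_add_X_pow, Polynomial.coeff_one,
    Polynomial.coeff_X_pow]
  rw [if_pos (by omega : k ≤ k + k), if_pos (by omega : k * 2 ≤ k + k),
    if_neg (by omega : ¬ k * 3 ≤ k + k), if_neg (by omega : ¬ k + k = 0),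
    if_neg (by omega : ¬ k + k = k), if_pos (by omega : k + k = k * 2),
    if_neg (by omega : ¬ k + k = k * 3), if_neg (by omega : ¬ k + k = k * 4),
    (by omega : k + k - k = k), (by omega : k + k - k * 2 = 0)]
  rw [(by omega : k * 4 = 2 * (k + k)), (by omega : k * 3 = 3 * k),
    (by omega : k * 2 = k + k)]
  have hsym : ((3 * k).choose k : ℤ) = ((3 * k).choose (k + k) : ℤ) := by
    have h := Nat.choose_symm (show k ≤ 3 * k by omega)
    rw [show 3 * k - k = k + k by omega] at h
    exact_mod_cast h.symm
  have e0 : k.choose (k + k) = 0 := Nat.choose_eq_zero_of_lt (by omega)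
  simp only [Nat.choose_self, Nat.choose_zero_right, e0]
  rw [if_pos (by omega : k ≤ k + k), if_pos (le_refl (k + k)),
    if_pos (by omega : k ≤ k + k)]
  push_cast
  linarith [hsym]
end

section
/- For every odd integer p ≥ 5, writing x = ⌊p/2⌋, Φ_odd(p) = C(2p,p) − 4·C(3x+2, x+1) − 4·C(3x+1, x) + 2·C(2x+2, x+1) + 8·C(2x+1, x) + 2·C(2x, x) − 4. -/
open Finset

/-- `Φ_odd(p)` for odd `p`, with `x = ⌊p/2⌋`: the sum over tuples `(x_1,x_2,x_3,x_4)`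
with `Σ x_i = p`, `1 ≤ x_1, x_2 ≤ x` and `1 ≤ x_3, x_4 ≤ x−1`, of
`C(x+1,x_1)·C(x+1,x_2)·C(x,x_3)·C(x,x_4)`. -/
def PhiOdd (p : ℕ) : ℕ :=
  ∑ t ∈ (Finset.Nat.antidiagonalTuple 4 p).filter
      (fun t => 1 ≤ t 0 ∧ t 0 ≤ p / 2 ∧ 1 ≤ t 1 ∧ t 1 ≤ p / 2 ∧
        1 ≤ t 2 ∧ t 2 ≤ p / 2 - 1 ∧ 1 ≤ t 3 ∧ t 3 ≤ p / 2 - 1),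
    (p / 2 + 1).choose (t 0) * (p / 2 + 1).choose (t 1) *
      (p / 2).choose (t 2) * (p / 2).choose (t 3)

namespace PhiOddAux

open Polynomial

lemma coeff_prod_fin4 (Q : Fin 4 → Polynomial ℤ) (p : ℕ) :
    (∏ i, Q i).coeff p = ∑ t ∈ Finset.Nat.antidiagonalTuple 4 p, ∏ i, (Q i).coeff (t i) := by
  have h1 : (∏ i, Q i).coeff p = PowerSeries.coeff (R := ℤ) p ((∏ i, Q i : Polynomial ℤ) : PowerSeries ℤ) :=
    (Polynomial.coeff_coe _ _).symm
  rw [h1]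
  rw [show ((∏ i, Q i : Polynomial ℤ) : PowerSeries ℤ) = ∏ i, ((Q i : PowerSeries ℤ)) by
    simp only [← Polynomial.coeToPowerSeries.ringHom_apply]
    exact map_prod _ Q Finset.univ]
  rw [PowerSeries.coeff_prod]
  rw [Finset.finsuppAntidiag, Finset.sum_map]
  simp only [Function.Embedding.coeFn_mk, Finsupp.coe_mk, Polynomial.coeff_coe]
  change ∑ x ∈ (Finset.univ.piAntidiag p).attach, ∏ i, (Q i).coeff (x.1 i) = _
  rw [Finset.sum_attach (Finset.piAntidiag Finset.univ p)
    (fun f => ∏ i, (Q i).coeff (f i))]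
  rw [Finset.piAntidiag_univ_fin_eq_antidiagonalTuple p 4]

lemma expand_poly {R : Type*} [CommRing R] (A B X Y : R) :
    (A*B - 1 - X*Y)^2 * (B - 1 - Y)^2 =
      A^2*B^4 + (-2 : ℤ) • (A^2*B^3) + (-2 : ℤ) • (A^2*Y*B^3) + A^2*B^2 + (2:ℤ) • (A^2*Y*B^2) + A^2*Y^2*B^2
      + (-2:ℤ) • (A*B^3) + (4:ℤ) • (A*B^2) + (4:ℤ) • (A*Y*B^2) + (-2:ℤ) • (A*B) + (-4:ℤ) • (A*Y*B) + (-2:ℤ) • (A*Y^2*B)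
      + (-2:ℤ) • (X*Y*A*B^3) + (4:ℤ) • (X*Y*A*B^2) + (4:ℤ) • (X*Y^2*A*B^2) + (-2:ℤ) • (X*Y*A*B) + (-4:ℤ) • (X*Y^2*A*B) + (-2:ℤ) • (X*Y^3*A*B)
      + B^2 + (-2:ℤ) • B + (-2:ℤ) • (Y*B) + 1 + (2:ℤ) • Y + Y^2
      + (2:ℤ) • (X*Y*B^2) + (-4:ℤ) • (X*Y*B) + (-4:ℤ) • (X*Y^2*B) + (2:ℤ) • (X*Y) + (4:ℤ) • (X*Y^2) + (2:ℤ) • (X*Y^3)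
      + X^2*Y^2*B^2 + (-2:ℤ) • (X^2*Y^2*B) + (-2:ℤ) • (X^2*Y^3*B) + X^2*Y^2 + (2:ℤ) • (X^2*Y^3) + X^2*Y^4 := by
  simp only [zsmul_eq_mul]; push_cast; ring

lemma coeff_term (a b n : ℕ) :
    ((X : Polynomial ℤ)^a * (1+X)^b).coeff n = if a ≤ n then (b.choose (n-a) : ℤ) else 0 := by
  rw [Polynomial.coeff_X_pow_mul', Polynomial.coeff_one_add_X_pow]

end PhiOddAux

open Polynomial PhiOddAux in
set_option maxHeartbeats 4000000 in
/-- Closed form for `Φ_odd(p)` when `p ≥ 5` is odd, with `x = ⌊p/2⌋`. -/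
theorem PhiOdd_eq (p : ℕ) (hp : 5 ≤ p) (hodd : Odd p) :
    (PhiOdd p : ℤ) =
      (2 * p).choose p - 4 * (3 * (p / 2) + 2).choose (p / 2 + 1)
        - 4 * (3 * (p / 2) + 1).choose (p / 2)
        + 2 * (2 * (p / 2) + 2).choose (p / 2 + 1)
        + 8 * (2 * (p / 2) + 1).choose (p / 2)
        + 2 * (2 * (p / 2)).choose (p / 2) - 4 := by
  have hpm : p % 2 = 1 := Nat.odd_iff.mp hodd
  obtain ⟨x, hx⟩ : ∃ x, p = 2*x+1 := ⟨p/2, by omega⟩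
  subst hx
  have hx2 : 2 ≤ x := by omega
  have hdiv : (2*x+1) / 2 = x := by omega
  rw [hdiv]
  set P0 : Polynomial ℤ := (1+X)^(x+1) - 1 - X^(x+1) with hP0
  set P2 : Polynomial ℤ := (1+X)^x - 1 - X^x with hP2
  have hc0 : ∀ j, P0.coeff j = if 1 ≤ j ∧ j ≤ x then (((x+1).choose j : ℕ) : ℤ) else 0 := by
    intro j
    rw [hP0]
    simp only [Polynomial.coeff_sub, Polynomial.coeff_one_add_X_pow, Polynomial.coeff_one,
      Polynomial.coeff_X_pow]
    by_cases h0 : j = 0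
    · subst h0; simp
    by_cases h1 : j = x+1
    · subst h1
      rw [Nat.choose_self]
      have : ¬(1 ≤ x+1 ∧ x+1 ≤ x) := by omega
      simp [this, h0]
    by_cases h2 : 1 ≤ j ∧ j ≤ x
    · simp [h0, h1, h2]
    · rw [Nat.choose_eq_zero_of_lt (by omega)]
      simp [h0, h1, h2]
  have hc2 : ∀ j, P2.coeff j = if 1 ≤ j ∧ j ≤ x - 1 then ((x.choose j : ℕ) : ℤ) else 0 := by
    intro j
    rw [hP2]
    simp only [Polynomial.coeff_sub, Polynomial.coeff_one_add_X_pow, Polynomial.coeff_one,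
      Polynomial.coeff_X_pow]
    by_cases h0 : j = 0
    · subst h0; simp; omega
    by_cases h1 : j = x
    · subst h1
      rw [Nat.choose_self]
      have : ¬(1 ≤ j ∧ j ≤ j - 1) := by omega
      simp [this, h0]
    by_cases h2 : 1 ≤ j ∧ j ≤ x - 1
    · simp [h0, h1, h2]
    · rw [Nat.choose_eq_zero_of_lt (by omega)]
      simp [h0, h1, h2]
  have h4 : ∏ i, (![P0, P0, P2, P2]) i = P0^2 * P2^2 := by
    rw [Fin.prod_univ_four]
    simp only [Matrix.cons_val_zero, Matrix.cons_val_one, Matrix.head_cons,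
      Matrix.cons_val_two, Matrix.tail_cons, Matrix.cons_val_three]
    ring
  have step1 : (PhiOdd (2*x+1) : ℤ) = (P0^2 * P2^2).coeff (2*x+1) := by
    rw [← h4, coeff_prod_fin4]
    rw [PhiOdd]
    push_cast
    rw [Finset.sum_filter]
    simp only [hdiv]
    refine Finset.sum_congr rfl fun t ht => ?_
    rw [Fin.prod_univ_four]
    simp only [Matrix.cons_val_zero, Matrix.cons_val_one, Matrix.head_cons,
      Matrix.cons_val_two, Matrix.tail_cons, Matrix.cons_val_three]
    rw [hc0 (t 0), hc0 (t 1), hc2 (t 2), hc2 (t 3)]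
    by_cases h0 : 1 ≤ t 0 ∧ t 0 ≤ x <;> by_cases h1 : 1 ≤ t 1 ∧ t 1 ≤ x <;>
      by_cases h2 : 1 ≤ t 2 ∧ t 2 ≤ x - 1 <;> by_cases h3 : 1 ≤ t 3 ∧ t 3 ≤ x - 1 <;>
      simp_all <;> split_ifs <;> first | rfl | omega
  rw [step1]
  have key : P0^2 * P2^2 =
      (1:ℤ) • ((X:Polynomial ℤ)^(0) * (1+X)^(4*x+2))
      + (-2:ℤ) • ((X:Polynomial ℤ)^(0) * (1+X)^(3*x+2))
      + (-2:ℤ) • ((X:Polynomial ℤ)^(x) * (1+X)^(3*x+2))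
      + (1:ℤ) • ((X:Polynomial ℤ)^(0) * (1+X)^(2*x+2))
      + (2:ℤ) • ((X:Polynomial ℤ)^(x) * (1+X)^(2*x+2))
      + (1:ℤ) • ((X:Polynomial ℤ)^(2*x) * (1+X)^(2*x+2))
      + (-2:ℤ) • ((X:Polynomial ℤ)^(0) * (1+X)^(3*x+1))
      + (4:ℤ) • ((X:Polynomial ℤ)^(0) * (1+X)^(2*x+1))
      + (4:ℤ) • ((X:Polynomial ℤ)^(x) * (1+X)^(2*x+1))
      + (-2:ℤ) • ((X:Polynomial ℤ)^(0) * (1+X)^(x+1))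
      + (-4:ℤ) • ((X:Polynomial ℤ)^(x) * (1+X)^(x+1))
      + (-2:ℤ) • ((X:Polynomial ℤ)^(2*x) * (1+X)^(x+1))
      + (-2:ℤ) • ((X:Polynomial ℤ)^(x+1) * (1+X)^(3*x+1))
      + (4:ℤ) • ((X:Polynomial ℤ)^(x+1) * (1+X)^(2*x+1))
      + (4:ℤ) • ((X:Polynomial ℤ)^(2*x+1) * (1+X)^(2*x+1))
      + (-2:ℤ) • ((X:Polynomial ℤ)^(x+1) * (1+X)^(x+1))
      + (-4:ℤ) • ((X:Polynomial ℤ)^(2*x+1) * (1+X)^(x+1))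
      + (-2:ℤ) • ((X:Polynomial ℤ)^(3*x+1) * (1+X)^(x+1))
      + (1:ℤ) • ((X:Polynomial ℤ)^(0) * (1+X)^(2*x))
      + (-2:ℤ) • ((X:Polynomial ℤ)^(0) * (1+X)^(x))
      + (-2:ℤ) • ((X:Polynomial ℤ)^(x) * (1+X)^(x))
      + (1:ℤ) • ((X:Polynomial ℤ)^(0) * (1+X)^(0))
      + (2:ℤ) • ((X:Polynomial ℤ)^(x) * (1+X)^(0))
      + (1:ℤ) • ((X:Polynomial ℤ)^(2*x) * (1+X)^(0))
      + (2:ℤ) • ((X:Polynomial ℤ)^(x+1) * (1+X)^(2*x))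
      + (-4:ℤ) • ((X:Polynomial ℤ)^(x+1) * (1+X)^(x))
      + (-4:ℤ) • ((X:Polynomial ℤ)^(2*x+1) * (1+X)^(x))
      + (2:ℤ) • ((X:Polynomial ℤ)^(x+1) * (1+X)^(0))
      + (4:ℤ) • ((X:Polynomial ℤ)^(2*x+1) * (1+X)^(0))
      + (2:ℤ) • ((X:Polynomial ℤ)^(3*x+1) * (1+X)^(0))
      + (1:ℤ) • ((X:Polynomial ℤ)^(2*x+2) * (1+X)^(2*x))
      + (-2:ℤ) • ((X:Polynomial ℤ)^(2*x+2) * (1+X)^(x))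
      + (-2:ℤ) • ((X:Polynomial ℤ)^(3*x+2) * (1+X)^(x))
      + (1:ℤ) • ((X:Polynomial ℤ)^(2*x+2) * (1+X)^(0))
      + (2:ℤ) • ((X:Polynomial ℤ)^(3*x+2) * (1+X)^(0))
      + (1:ℤ) • ((X:Polynomial ℤ)^(4*x+2) * (1+X)^(0)) := by
    rw [hP0, hP2]
    simp only [zsmul_eq_mul]; push_cast; ring
  rw [key]
  simp only [Polynomial.coeff_add, Polynomial.coeff_smul, smul_eq_mul, coeff_term]
  have c1 : (0:ℕ) ≤ 2*x+1 := by omega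
  have c2 : x ≤ 2*x+1 := by omega
  have c3 : x+1 ≤ 2*x+1 := by omega
  have c4 : 2*x ≤ 2*x+1 := by omega
  have c5 : 2*x+1 ≤ 2*x+1 := by omega
  have c6 : ¬(2*x+2 ≤ 2*x+1) := by omega
  have c7 : ¬(3*x+1 ≤ 2*x+1) := by omega
  have c8 : ¬(3*x+2 ≤ 2*x+1) := by omega
  have c9 : ¬(4*x+2 ≤ 2*x+1) := by omega
  simp only [c1, c2, c3, c4, c5, c6, c7, c8, c9, if_true, if_false, ite_true, ite_false]
  simp only [Nat.sub_zero, show 2*x+1 - x = x+1 from by omega,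
    show 2*x+1 - (x+1) = x from by omega, show 2*x+1 - 2*x = 1 from by omega,
    show 2*x+1 - (2*x+1) = 0 from by omega]
  have symm1 : (3*x+2).choose (2*x+1) = (3*x+2).choose (x+1) := by
    rw [← Nat.choose_symm (show x+1 ≤ 3*x+2 by omega)]; congr 1 <;> omega
  have symm2 : (3*x+1).choose (2*x+1) = (3*x+1).choose x := by
    rw [← Nat.choose_symm (show x ≤ 3*x+1 by omega)]; congr 1 <;> omega
  have symm3 : (2*x+2).choose (2*x+1) = (2*x+2).choose 1 := by
    rw [← Nat.choose_symm (show 1 ≤ 2*x+2 by omega)]; congr 1 <;> omega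
  have symm4 : (2*x+1).choose (x+1) = (2*x+1).choose x := by
    rw [← Nat.choose_symm (show x ≤ 2*x+1 by omega)]; congr 1 <;> omega
  have symm5 : (x+1).choose x = x+1 := by
    have h := Nat.choose_symm (show 1 ≤ x+1 by omega)
    simp only [Nat.add_sub_cancel] at h
    rw [h, Nat.choose_one_right]
  have z1 : (x+1).choose (2*x+1) = 0 := Nat.choose_eq_zero_of_lt (by omega)
  have z2 : x.choose (2*x+1) = 0 := Nat.choose_eq_zero_of_lt (by omega)
  have z3 : x.choose (x+1) = 0 := Nat.choose_eq_zero_of_lt (by omega)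
  have z4 : (2*x).choose (2*x+1) = 0 := Nat.choose_eq_zero_of_lt (by omega)
  have z5 : Nat.choose 0 (x+1) = 0 := Nat.choose_eq_zero_of_lt (by omega)
  have z6 : Nat.choose 0 (2*x+1) = 0 := Nat.choose_eq_zero_of_lt (by omega)
  have z7 : Nat.choose 0 x = 0 := Nat.choose_eq_zero_of_lt (by omega)
  have z8 : Nat.choose 0 1 = 0 := Nat.choose_eq_zero_of_lt (by omega)
  simp only [symm1, symm2, symm3, symm4, symm5, z1, z2, z3, z4, z5, z6, z7, z8,
    Nat.choose_self, Nat.choose_zero_right, Nat.choose_one_right,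
    show 2*(2*x+1) = 4*x+2 from by ring]
  push_cast
  ring
end

section
/- For every even integer p ≥ 14 and every divisor d of p with 3 ≤ d < p, we have C(2p − p/d, p) − 8·C(3p/2, p) + 12·C(p, p/2) − 6 > 0. -/
/-- For even `p ≥ 14` and any divisor `d` of `p` with `3 ≤ d < p`,
`C(2p − p/d, p) − 8·C(3p/2, p) + 12·C(p, p/2) − 6 > 0`. -/
theorem claim_even (p d : ℕ) (hp : 14 ≤ p) (hev : Even p) (hdvd : d ∣ p)
    (hd : 3 ≤ d) (hdp : d < p) :
    0 < ((2 * p - p / d).choose p : ℤ) - 8 * (3 * p / 2).choose p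
        + 12 * p.choose (p / 2) - 6 := by
  obtain ⟨q, hq⟩ := hev
  have hq7 : 7 ≤ q := by omega
  set e := p / d with he
  have he3 : e ≤ q - 3 := by
    have h1 : e ≤ p / 3 := Nat.div_le_div_left hd (by norm_num)
    omega
  have h2p : 2 * p - p / d = 4 * q - e := by omega
  have h32 : 3 * p / 2 = 3 * q := by omega
  have hp2 : p / 2 = q := by omega
  rw [h2p, h32, hp2]
  set A := (3 * q).choose p with hA
  set B := (3 * q + 3).choose p with hB
  have s1 := Nat.choose_mul_succ_eq (3 * q) p
  have s2 := Nat.choose_mul_succ_eq (3 * q + 1) p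
  have s3 := Nat.choose_mul_succ_eq (3 * q + 2) p
  have e1 : 3 * q + 1 - p = q + 1 := by omega
  have e2 : 3 * q + 1 + 1 - p = q + 2 := by omega
  have e3 : 3 * q + 2 + 1 - p = q + 3 := by omega
  rw [e1] at s1; rw [e2] at s2; rw [e3] at s3
  have prod : A * ((3 * q + 1) * (3 * q + 2) * (3 * q + 3)) =
      B * ((q + 1) * (q + 2) * (q + 3)) := by
    have := congrArg (· * ((3 * q + 2) * (3 * q + 3))) s1
    calc A * ((3 * q + 1) * (3 * q + 2) * (3 * q + 3))
        = (A * (3 * q + 1)) * (3 * q + 2) * (3 * q + 3) := by ring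
      _ = ((3 * q + 1).choose p * (q + 1)) * (3 * q + 2) * (3 * q + 3) := by rw [s1]
      _ = ((3 * q + 1).choose p * (3 * q + 1 + 1)) * (q + 1) * (3 * q + 3) := by ring
      _ = ((3 * q + 2).choose p * (q + 2)) * (q + 1) * (3 * q + 3) := by rw [s2]
      _ = ((3 * q + 2).choose p * (3 * q + 2 + 1)) * (q + 1) * (q + 2) := by ring
      _ = ((3 * q + 3).choose p * (q + 3)) * (q + 1) * (q + 2) := by rw [s3]
      _ = B * ((q + 1) * (q + 2) * (q + 3)) := by ring
  have hnum : 8 * ((q + 1) * (q + 2) * (q + 3)) ≤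
      (3 * q + 1) * (3 * q + 2) * (3 * q + 3) := by
    obtain ⟨r, hr⟩ : ∃ r, q = r + 7 := ⟨q - 7, by omega⟩
    subst hr
    nlinarith [Nat.zero_le (r * r * r), Nat.zero_le (r * r), Nat.zero_le r]
  have key : 8 * A ≤ B := by
    have hpos : 0 < (q + 1) * (q + 2) * (q + 3) := by positivity
    have : 8 * A * ((q + 1) * (q + 2) * (q + 3)) ≤ B * ((q + 1) * (q + 2) * (q + 3)) := by
      calc 8 * A * ((q + 1) * (q + 2) * (q + 3))
          = A * (8 * ((q + 1) * (q + 2) * (q + 3))) := by ring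
        _ ≤ A * ((3 * q + 1) * (3 * q + 2) * (3 * q + 3)) :=
            Nat.mul_le_mul_left _ hnum
        _ = B * ((q + 1) * (q + 2) * (q + 3)) := prod
    exact Nat.le_of_mul_le_mul_right this hpos
  have mono : B ≤ (4 * q - e).choose p := Nat.choose_le_choose p (by omega)
  have hcp : 1 ≤ p.choose q := Nat.choose_pos (by omega)
  have h8 : 8 * A ≤ (4 * q - e).choose p := le_trans key mono
  have := (Int.ofNat_le).mpr h8
  have := (Int.ofNat_le).mpr hcp
  push_cast at *
  linarith
end

section
/- For every odd integer p ≥ 17 and every divisor d of p with 3 ≤ d < p, writing x = ⌊p/2⌋, we have C(2p − p/d, p) − 4·C(3x+2, x+1) − 4·C(3x+1, x) > 0. -/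
lemma choose_step (p n : ℕ) (hpn : p ≤ n) (h2 : n + 1 ≤ 2 * p) :
    2 * n.choose p ≤ (n + 1).choose p := by
  obtain ⟨k, rfl⟩ : ∃ k, p = k + 1 := ⟨p - 1, by omega⟩
  have hmono : n.choose (k + 1) ≤ n.choose k := by
    have h := Nat.choose_succ_right_eq n k
    have hle : n.choose (k + 1) * (k + 1) ≤ n.choose k * (k + 1) := by
      rw [h]
      exact Nat.mul_le_mul_left _ (by omega)
    exact Nat.le_of_mul_le_mul_right hle (by omega)
  calc 2 * n.choose (k + 1) = n.choose (k + 1) + n.choose (k + 1) := by ring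
    _ ≤ n.choose k + n.choose (k + 1) := by omega
    _ = (n + 1).choose (k + 1) := (Nat.choose_succ_succ' n k).symm

lemma choose_iter (p M : ℕ) (hpM : p ≤ M) :
    ∀ s, M + s ≤ 2 * p → 2 ^ s * M.choose p ≤ (M + s).choose p := by
  intro s
  induction s with
  | zero => simp
  | succ s ih =>
    intro h
    have h1 : M + s ≤ 2 * p := by omega
    have h2 := ih h1
    calc 2 ^ (s + 1) * M.choose p = 2 * (2 ^ s * M.choose p) := by ring
      _ ≤ 2 * (M + s).choose p := by omega
      _ ≤ (M + s + 1).choose p := choose_step p (M + s) (by omega) (by omega)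
      _ = (M + (s + 1)).choose p := by ring_nf

/-- For odd `p ≥ 17` and any divisor `d` of `p` with `3 ≤ d < p`, writing `x = ⌊p/2⌋`,
`C(2p − p/d, p) − 4·C(3x+2, x+1) − 4·C(3x+1, x) > 0`. -/
theorem claim_odd (p d : ℕ) (hp : 17 ≤ p) (hodd : Odd p) (hdvd : d ∣ p)
    (hd : 3 ≤ d) (hdp : d < p) :
    0 < ((2 * p - p / d).choose p : ℤ) - 4 * (3 * (p / 2) + 2).choose (p / 2 + 1)
        - 4 * (3 * (p / 2) + 1).choose (p / 2) := by
  obtain ⟨m, hm⟩ := hodd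
  subst hm
  have hx : (2 * m + 1) / 2 = m := by omega
  rw [hx]
  set p := 2 * m + 1 with hpdef
  have hd0 : 0 < d := by omega
  have hq1 : 1 ≤ p / d := (Nat.one_le_div_iff hd0).mpr (le_of_lt hdp)
  have hq3 : p / d ≤ p / 3 := Nat.div_le_div_left hd (by norm_num)
  have hqm : p / d + 3 ≤ m := by omega
  -- the iteration
  have hN : 3 * m + 2 + (m - p / d) = 2 * p - p / d := by omega
  have key : 2 ^ (m - p / d) * (3 * m + 2).choose p ≤ (2 * p - p / d).choose p := by
    have := choose_iter p (3 * m + 2) (by omega) (m - p / d) (by omega)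
    rwa [hN] at this
  have hpow : 8 ≤ 2 ^ (m - p / d) := by
    calc (8 : ℕ) = 2 ^ 3 := by norm_num
      _ ≤ 2 ^ (m - p / d) := Nat.pow_le_pow_right (by norm_num) (by omega)
  -- symmetry : C(3m+2, p) = C(3m+2, m+1)
  have hsymm : (3 * m + 2).choose (m + 1) = (3 * m + 2).choose p := by
    have h := Nat.choose_symm (n := 3 * m + 2) (k := p) (by omega)
    have : 3 * m + 2 - p = m + 1 := by omega
    rw [this] at h
    exact h
  -- Pascal
  have hpascal : (3 * m + 2).choose (m + 1)
      = (3 * m + 1).choose m + (3 * m + 1).choose (m + 1) :=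
    Nat.choose_succ_succ' (3 * m + 1) m
  have hposc : 0 < (3 * m + 1).choose (m + 1) := Nat.choose_pos (by omega)
  have hmain : 8 * (3 * m + 2).choose (m + 1) ≤ (2 * p - p / d).choose p := by
    calc 8 * (3 * m + 2).choose (m + 1)
        ≤ 2 ^ (m - p / d) * (3 * m + 2).choose (m + 1) :=
          Nat.mul_le_mul_right _ hpow
      _ = 2 ^ (m - p / d) * (3 * m + 2).choose p := by rw [hsymm]
      _ ≤ (2 * p - p / d).choose p := key
  have hlt : 4 * (3 * m + 2).choose (m + 1) + 4 * (3 * m + 1).choose m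
      < 8 * (3 * m + 2).choose (m + 1) := by omega
  have h := lt_of_lt_of_le hlt hmain
  omega
end

section
/- Let p = kd with integers k, d satisfying 1 < k, d < p and d ≥ 3. Then C(2p,p) − Φ*(p,d) ≥ C(2p − p/d, p). -/
open Finset

/-- Multi-fold Vandermonde over `antidiagonalTuple`. -/
lemma vand_tuple (k : ℕ) : ∀ n p : ℕ,
    ∑ x ∈ Finset.Nat.antidiagonalTuple n p, ∏ i, k.choose (x i) = (n * k).choose p := by
  intro n
  induction n with
  | zero =>
    intro p
    cases p with
    | zero => simp [Finset.Nat.antidiagonalTuple_zero_zero]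
    | succ q => simp [Finset.Nat.antidiagonalTuple_zero_succ]
  | succ n ih =>
    intro p
    have hmul : (n + 1) * k = k + n * k := by ring
    rw [hmul, Nat.add_choose_eq]
    have hr : ∀ ab ∈ Finset.HasAntidiagonal.antidiagonal p,
        k.choose ab.1 * (n * k).choose ab.2
          = ∑ y ∈ Finset.Nat.antidiagonalTuple n ab.2, k.choose ab.1 * ∏ i, k.choose (y i) := by
      intro ab _
      rw [← ih ab.2, Finset.mul_sum]
    rw [Finset.sum_congr rfl hr, Finset.sum_sigma']
    refine (Finset.sum_nbij' (i := fun z => Fin.cons z.1.1 z.2)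
      (j := fun x => ⟨(x 0, ∑ i, Fin.tail x i), Fin.tail x⟩) ?_ ?_ ?_ ?_ ?_).symm
    · rintro ⟨⟨a, b⟩, y⟩ hz
      simp only [Finset.mem_sigma, Finset.mem_antidiagonal,
        Finset.Nat.mem_antidiagonalTuple] at hz
      rw [Finset.Nat.mem_antidiagonalTuple, Fin.sum_cons]
      simpa [hz.2] using hz.1
    · intro x hx
      rw [Finset.Nat.mem_antidiagonalTuple] at hx
      simp only [Finset.mem_sigma, Finset.mem_antidiagonal,
        Finset.Nat.mem_antidiagonalTuple]
      refine ⟨?_, trivial⟩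
      rw [← hx, Fin.sum_univ_succ]
      exact Finset.HasAntidiagonal.mem_antidiagonal.mpr rfl
    · rintro ⟨⟨a, b⟩, y⟩ hz
      simp only [Finset.mem_sigma, Finset.mem_antidiagonal,
        Finset.Nat.mem_antidiagonalTuple] at hz
      simp [Fin.cons_zero, Fin.tail_cons, hz.2]
    · intro x hx
      simp [Fin.cons_self_tail]
    · rintro ⟨⟨a, b⟩, y⟩ hz
      rw [Fin.prod_univ_succ]
      simp [Fin.cons_zero, Fin.cons_succ]

/-- The restricted sum over tuples with first coordinate zero. -/
lemma vand_tuple_zero (k n p : ℕ) :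
    ∑ x ∈ (Finset.Nat.antidiagonalTuple (n + 1) p).filter (fun x => x 0 = 0),
      ∏ i, k.choose (x i) = (n * k).choose p := by
  rw [← vand_tuple k n p]
  refine Finset.sum_nbij' (i := fun x => Fin.tail x) (j := fun y => Fin.cons 0 y) ?_ ?_ ?_ ?_ ?_
  · intro x hx
    simp only [Finset.mem_filter, Finset.Nat.mem_antidiagonalTuple] at hx
    rw [Finset.Nat.mem_antidiagonalTuple]
    have := hx.1
    rw [Fin.sum_univ_succ, hx.2, zero_add] at this
    exact this
  · intro y hy
    rw [Finset.Nat.mem_antidiagonalTuple] at hy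
    simp only [Finset.mem_filter, Finset.Nat.mem_antidiagonalTuple]
    constructor
    · rw [Fin.sum_cons, hy, zero_add]
    · simp
  · intro x hx
    simp only [Finset.mem_filter] at hx
    have h := Fin.cons_self_tail x
    rw [hx.2] at h
    exact h
  · intro y hy
    simp [Fin.tail_cons]
  · intro x hx
    simp only [Finset.mem_filter] at hx
    rw [Fin.prod_univ_succ, hx.2, Nat.choose_zero_right, one_mul]
    rfl

lemma key_ineq (k n p : ℕ) (hn : 0 < n) :
    (∑ x ∈ (Finset.Nat.antidiagonalTuple n p).filter
        (fun x => ∀ i, 1 ≤ x i ∧ x i ≤ k - 1), ∏ i, k.choose (x i))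
      + ((n - 1) * k).choose p ≤ (n * k).choose p := by
  obtain ⟨m, rfl⟩ : ∃ m, n = m + 1 := ⟨n - 1, by omega⟩
  simp only [Nat.add_sub_cancel]
  rw [← vand_tuple k (m + 1) p, ← vand_tuple_zero k m p,
    ← Finset.sum_filter_add_sum_filter_not (Finset.Nat.antidiagonalTuple (m + 1) p)
      (fun x => ∀ i, 1 ≤ x i ∧ x i ≤ k - 1) (fun x => ∏ i, k.choose (x i))]
  refine Nat.add_le_add_left (Finset.sum_le_sum_of_subset ?_) _
  intro x hx
  simp only [Finset.mem_filter] at hx ⊢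
  refine ⟨hx.1, fun hP => ?_⟩
  have := (hP 0).1
  omega

/-- For `p = k·d` with `1 < k, d < p` and `d ≥ 3`:
`C(2p,p) − Φ*(p,d) ≥ C(2p − p/d, p)`. -/
theorem choose_sub_PhiStar_ge (k d p : ℕ) (hp : p = k * d) (hk : 1 < k) (hkp : k < p)
    (hd : 1 < d) (hdp : d < p) (hd3 : 3 ≤ d) :
    ((2 * p - p / d).choose p : ℤ) ≤ ((2 * p).choose p : ℤ) - PhiStar k d p := by
  have hdiv : p / d = k := by rw [hp, Nat.mul_div_cancel k (by omega)]
  have hK' : PhiStar k d p + ((2 * d - 1) * k).choose p ≤ ((2 * d) * k).choose p :=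
    key_ineq k (2 * d) p (by omega)
  have e1 : (2 * d) * k = 2 * p := by rw [hp]; ring
  have e2 : (2 * d - 1) * k = 2 * p - k := by rw [Nat.sub_one_mul, e1]
  rw [hdiv]
  rw [e1, e2] at hK'
  have hz : (PhiStar k d p : ℤ) + ((2 * p - k).choose p : ℤ) ≤ ((2 * p).choose p : ℤ) := by
    exact_mod_cast hK'
  linarith
end
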